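/- arXiv:1303.2103 — 2 statements merged into one kernel-verified Lean document; each statement's English description precedes it below -/
import Mathlib

section
/- For every natural number n ≥ 2, ψ(n(n-1)/2 + 2) = n + 1; that is, every surjective colouring Δ : ℕ^(2) ↠ [n(n-1)/2 + 2] satisfies |F_Δ| ≥ n + 1, and some such surjective colouring satisfies |F_Δ| = n + 1. -/
/-- The colour of the unordered edge `{x, y}` (only values on distinct pairs matter). -/
def edgeCol (Δ : ℕ → ℕ → ℕ) (x y : ℕ) : ℕ := Δ (min x y) (max x y)

/-- `colourSet Δ X` is the set of colours attained by `Δ` on edges with both endpoints in `X`. -/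
def colourSet (Δ : ℕ → ℕ → ℕ) (X : Set ℕ) : Set ℕ :=
  {c | ∃ x ∈ X, ∃ y ∈ X, x ≠ y ∧ edgeCol Δ x y = c}

/-- `Δ` is a surjective colouring `ℕ^(2) ↠ [k]` of the edges of the complete
graph on `ℕ` with colour set `[k] = {1, …, k}`. -/
def IsColouring (Δ : ℕ → ℕ → ℕ) (k : ℕ) : Prop :=
  (∀ x y : ℕ, x ≠ y → edgeCol Δ x y ∈ Finset.Icc 1 k) ∧
  (∀ c ∈ Finset.Icc 1 k, ∃ x y : ℕ, x ≠ y ∧ edgeCol Δ x y = c)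

/-- `F_Δ`: the set of `m ∈ [k]` for which some infinite `X ⊆ ℕ` is exactly `m`-coloured. -/
def FSet (Δ : ℕ → ℕ → ℕ) (k : ℕ) : Set ℕ :=
  {m | m ∈ Finset.Icc 1 k ∧ ∃ X : Set ℕ, X.Infinite ∧ (colourSet Δ X).ncard = m}

/-- `ψ k`: the minimum of `|F_Δ|` over all surjective colourings `Δ : ℕ^(2) ↠ [k]`. -/
noncomputable def psi (k : ℕ) : ℕ :=
  sInf {m | ∃ Δ : ℕ → ℕ → ℕ, IsColouring Δ k ∧ (FSet Δ k).ncard = m}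

lemma edgeCol_symm (Δ : ℕ → ℕ → ℕ) (x y : ℕ) : edgeCol Δ x y = edgeCol Δ y x := by
  unfold edgeCol; rw [min_comm, max_comm]

/-- Pigeonhole: an infinite set mapped into `Icc 1 k` has an infinite fibre. -/
lemma pigeon {A : Set ℕ} (hA : A.Infinite) (g : ℕ → ℕ) (k : ℕ)
    (hg : ∀ x ∈ A, g x ∈ Finset.Icc 1 k) :
    ∃ c, (A ∩ {x | g x = c}).Infinite := by
  by_contra h
  push_neg at h
  have hfin : ∀ c, (A ∩ {x | g x = c}).Finite := fun c => h c
  have : A ⊆ ⋃ c ∈ (Finset.Icc 1 k : Finset ℕ), (A ∩ {x | g x = c}) := by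
    intro x hx
    exact Set.mem_biUnion (hg x hx) ⟨hx, rfl⟩
  exact hA ((Set.Finite.biUnion (Finset.Icc 1 k).finite_toSet (fun c _ => hfin c)).subset this)

section Ramsey
variable (Δ : ℕ → ℕ → ℕ) (k : ℕ)

/-- One step of the Ramsey construction. -/
lemma stepEx (hcol : ∀ x y : ℕ, x ≠ y → edgeCol Δ x y ∈ Finset.Icc 1 k)
    (A : Set ℕ) (hA : A.Infinite) :
    ∃ B : Set ℕ, B.Infinite ∧ B ⊆ A \ {sInf A} ∧
      ∃ c, ∀ y ∈ B, edgeCol Δ (sInf A) y = c := by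
  have hA' : (A \ {sInf A}).Infinite := hA.diff (Set.finite_singleton _)
  obtain ⟨c, hc⟩ := pigeon hA' (edgeCol Δ (sInf A)) k (fun x hx => by
    apply hcol
    exact fun h => hx.2 (by simp [← h]))
  exact ⟨(A \ {sInf A}) ∩ {x | edgeCol Δ (sInf A) x = c}, hc,
    Set.inter_subset_left, c, fun y hy => hy.2⟩

noncomputable def rState (hcol : ∀ x y : ℕ, x ≠ y → edgeCol Δ x y ∈ Finset.Icc 1 k) :
    ℕ → {A : Set ℕ // A.Infinite}
  | 0 => ⟨Set.univ, Set.infinite_univ⟩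
  | t + 1 =>
    ⟨(stepEx Δ k hcol (rState hcol t).1 (rState hcol t).2).choose,
     (stepEx Δ k hcol (rState hcol t).1 (rState hcol t).2).choose_spec.1⟩

/-- Infinite Ramsey theorem for pairs, colours in `Icc 1 k`. -/
lemma ramsey (hcol : ∀ x y : ℕ, x ≠ y → edgeCol Δ x y ∈ Finset.Icc 1 k) :
    ∃ (M : Set ℕ) (γ : ℕ), M.Infinite ∧
      ∀ x ∈ M, ∀ y ∈ M, x ≠ y → edgeCol Δ x y = γ := by
  set st := rState Δ k hcol with hst
  set a : ℕ → ℕ := fun t => sInf (st t).1 with ha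
  have hspec : ∀ t, (st (t+1)).1 ⊆ (st t).1 \ {a t} ∧
      ∃ c, ∀ y ∈ (st (t+1)).1, edgeCol Δ (a t) y = c := by
    intro t
    have h := (stepEx Δ k hcol (st t).1 (st t).2).choose_spec
    exact ⟨h.2.1, h.2.2⟩
  choose hsub hc using hspec
  choose c hcspec using hc
  -- monotonicity
  have hmono : ∀ s t, s ≤ t → (st t).1 ⊆ (st s).1 := by
    intro s t hstle
    induction t with
    | zero => simp_all
    | succ t ih =>
      rcases Nat.lt_or_ge s (t+1) with h | h
      · exact ((hsub t).trans Set.diff_subset).trans (ih (Nat.lt_succ_iff.mp h))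
      · have : s = t + 1 := le_antisymm hstle h
        subst this; exact fun x hx => hx
  have hamem : ∀ t, a t ∈ (st t).1 := fun t =>
    Nat.sInf_mem ((st t).2.nonempty)
  have hkey : ∀ s t, s < t → a t ∈ (st (s+1)).1 := by
    intro s t hstlt
    exact hmono (s+1) t hstlt (hamem t)
  have hane : ∀ s t, s < t → a s ≠ a t := by
    intro s t hstlt h
    have := (hsub s) (hkey s t hstlt)
    exact this.2 (by simp [← h])
  have hedge : ∀ s t, s < t → edgeCol Δ (a s) (a t) = c s := by
    intro s t hstlt
    exact hcspec s _ (hkey s t hstlt)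
  obtain ⟨γ, hγ⟩ := pigeon (Set.infinite_univ (α := ℕ)) c k (fun t _ => by
    have h2 := hamem (t+1)
    have := hedge t (t+1) (Nat.lt_succ_self t)
    rw [← this]
    exact hcol _ _ (hane t (t+1) (Nat.lt_succ_self t)))
  set I : Set ℕ := Set.univ ∩ {x | c x = γ} with hI
  refine ⟨a '' I, γ, ?_, ?_⟩
  · apply Set.Infinite.image ?_ hγ
    intro s hs t ht h
    rcases lt_trichotomy s t with hlt | he | hlt
    · exact absurd h (hane s t hlt)
    · exact he
    · exact absurd h.symm (hane t s hlt)
  · rintro x ⟨s, hs, rfl⟩ y ⟨t, ht, rfl⟩ hne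
    rcases lt_trichotomy s t with hlt | he | hlt
    · rw [hedge s t hlt]; exact hs.2
    · subst he; exact absurd rfl hne
    · rw [edgeCol_symm, hedge t s hlt]; exact ht.2
end Ramsey

/-- Shrink an infinite set so that every vertex of a finite set `T` has
monochromatic links into it. -/
lemma links (Δ : ℕ → ℕ → ℕ) (k : ℕ)
    (hcol : ∀ x y : ℕ, x ≠ y → edgeCol Δ x y ∈ Finset.Icc 1 k)
    (M : Set ℕ) (hM : M.Infinite) (T : Finset ℕ) :
    ∃ (Y : Set ℕ) (lc : ℕ → ℕ), Y.Infinite ∧ Y ⊆ M ∧ (∀ a ∈ T, a ∉ Y) ∧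
      ∀ a ∈ T, ∀ y ∈ Y, edgeCol Δ a y = lc a := by
  classical
  induction T using Finset.induction_on with
  | empty => exact ⟨M, fun _ => 0, hM, fun x hx => hx, by simp, by simp⟩
  | @insert a T hnotmem ih =>
    obtain ⟨Y, lc, hYinf, hYM, hYT, hlc⟩ := ih
    have hY' : (Y \ {a}).Infinite := hYinf.diff (Set.finite_singleton _)
    obtain ⟨ca, hca⟩ := pigeon hY' (edgeCol Δ a) k (fun x hx => by
      apply hcol; exact fun h => hx.2 (by simp [h]))
    refine ⟨(Y \ {a}) ∩ {x | edgeCol Δ a x = ca}, Function.update lc a ca, hca,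
      fun x hx => hYM hx.1.1, ?_, ?_⟩
    · intro b hb hmem
      rcases Finset.mem_insert.mp hb with rfl | hb
      · exact hmem.1.2 rfl
      · exact hYT b hb hmem.1.1
    · intro b hb y hy
      rcases Finset.mem_insert.mp hb with rfl | hb
      · rw [Function.update_self]; exact hy.2
      · rw [Function.update_of_ne (fun h => hnotmem (by rw [← h]; exact hb))]
        exact hlc b hb y hy.1.1

section Fin
variable (γ : ℕ) (lc : ℕ → ℕ) (ec : ℕ → ℕ → ℕ)

/-- The finite colour-set function: base colour, link colours, edge colours. -/
def fC (S : Finset ℕ) : Finset ℕ :=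
  insert γ (S.image lc ∪ S.offDiag.image (fun p => ec p.1 p.2))

lemma mem_fC {S : Finset ℕ} {δ : ℕ} :
    δ ∈ fC γ lc ec S ↔ δ = γ ∨ (∃ x ∈ S, lc x = δ) ∨
      ∃ x ∈ S, ∃ y ∈ S, x ≠ y ∧ ec x y = δ := by
  simp only [fC, Finset.mem_insert, Finset.mem_union, Finset.mem_image,
    Finset.mem_offDiag, Prod.exists]
  constructor
  · rintro (h | ⟨x, hx, h⟩ | ⟨x, y, ⟨h1, h2, h3⟩, h⟩)
    · exact Or.inl h
    · exact Or.inr (Or.inl ⟨x, hx, h⟩)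
    · exact Or.inr (Or.inr ⟨x, h1, y, h2, h3, h⟩)
  · rintro (h | ⟨x, hx, h⟩ | ⟨x, hx, y, hy, hne, h⟩)
    · exact Or.inl h
    · exact Or.inr (Or.inl ⟨x, hx, h⟩)
    · exact Or.inr (Or.inr ⟨x, y, ⟨hx, hy, hne⟩, h⟩)

lemma gamma_mem_fC (S : Finset ℕ) : γ ∈ fC γ lc ec S := by simp [fC]

lemma fC_mono {S S' : Finset ℕ} (h : S ⊆ S') : fC γ lc ec S ⊆ fC γ lc ec S' := by
  intro δ hδ
  rw [mem_fC] at hδ ⊢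
  rcases hδ with h1 | ⟨x, hx, h1⟩ | ⟨x, hx, y, hy, hne, h1⟩
  · exact Or.inl h1
  · exact Or.inr (Or.inl ⟨x, h hx, h1⟩)
  · exact Or.inr (Or.inr ⟨x, h hx, y, h hy, hne, h1⟩)

lemma fC_empty : fC γ lc ec ∅ = {γ} := by
  simp [fC]

lemma fC_insert_subset (hsym : ∀ x y, ec x y = ec y x) {a : ℕ} {S : Finset ℕ} :
    fC γ lc ec (insert a S) ⊆ fC γ lc ec S ∪ insert (lc a) (S.image (ec a)) := by
  intro δ hδ
  rw [mem_fC] at hδ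
  simp only [Finset.mem_union, Finset.mem_insert, Finset.mem_image]
  rcases hδ with h1 | ⟨x, hx, h1⟩ | ⟨x, hx, y, hy, hne, h1⟩
  · refine Or.inl ?_
    rw [mem_fC]
    exact Or.inl h1
  · by_cases hxa : x = a
    · exact Or.inr (Or.inl (by rw [← h1, hxa]))
    · refine Or.inl ?_
      rw [mem_fC]
      exact Or.inr (Or.inl ⟨x, Finset.mem_of_mem_insert_of_ne hx hxa, h1⟩)
  · by_cases hxa : x = a
    · subst hxa
      exact Or.inr (Or.inr ⟨y, Finset.mem_of_mem_insert_of_ne hy (Ne.symm hne), h1⟩)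
    · by_cases hya : y = a
      · subst hya
        refine Or.inr (Or.inr ⟨x, Finset.mem_of_mem_insert_of_ne hx hxa, ?_⟩)
        rw [← hsym]
        exact h1
      · refine Or.inl ?_
        rw [mem_fC]
        exact Or.inr (Or.inr ⟨x, Finset.mem_of_mem_insert_of_ne hx hxa,
          y, Finset.mem_of_mem_insert_of_ne hy hya, hne, h1⟩)

lemma lc_mem_fC_insert {a : ℕ} {S : Finset ℕ} : lc a ∈ fC γ lc ec (insert a S) := by
  rw [mem_fC]
  exact Or.inr (Or.inl ⟨a, Finset.mem_insert_self a S, rfl⟩)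

/-- Chain lemma: if every vertex's link colour is new, the number of distinct
colour-counts over subsets exceeds `|S|`. -/
lemma chain_lemma :
    ∀ S : Finset ℕ, (∀ a ∈ S, lc a ∉ fC γ lc ec (S.erase a)) →
      S.card + 1 ≤ ((S.powerset).image (fun S' => (fC γ lc ec S').card)).card := by
  classical
  intro S
  induction S using Finset.strongInduction with
  | _ S ih =>
    rcases Finset.eq_empty_or_nonempty S with rfl | ⟨a, ha⟩
    · intro _
      simp only [Finset.card_empty, zero_add]
      exact Finset.card_pos.mpr (Finset.image_nonempty.mpr
        ⟨∅, Finset.empty_mem_powerset _⟩)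
    · intro hlcS
      set S' := S.erase a with hS'
      have hS'S : S' ⊂ S := Finset.erase_ssubset ha
      have hIH := ih S' hS'S (fun b hb => by
        have hbS : b ∈ S := hS'S.subset hb
        intro hmem
        refine hlcS b hbS (fC_mono γ lc ec ?_ hmem)
        intro x hx
        exact Finset.mem_erase.mpr ⟨Finset.ne_of_mem_erase hx,
          Finset.mem_of_mem_erase (Finset.mem_of_mem_erase hx)⟩)
      have hstrict : (fC γ lc ec S').card < (fC γ lc ec S).card := by
        apply Finset.card_lt_card
        constructor
        · exact fC_mono γ lc ec (Finset.erase_subset a S)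
        · intro hsub
          have hmem : lc a ∈ fC γ lc ec S := by
            have he : insert a S' = S := Finset.insert_erase ha
            rw [← he]
            exact lc_mem_fC_insert γ lc ec
          exact hlcS a ha (hsub hmem)
      have hnotmem : (fC γ lc ec S).card ∉
          ((S'.powerset).image (fun S'' => (fC γ lc ec S'').card)) := by
        intro hmem
        rw [Finset.mem_image] at hmem
        obtain ⟨S'', hS'', hcard⟩ := hmem
        rw [Finset.mem_powerset] at hS''
        have : (fC γ lc ec S'').card ≤ (fC γ lc ec S').card :=
          Finset.card_le_card (fC_mono γ lc ec hS'')
        omega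
      have hsub2 : insert (fC γ lc ec S).card
          ((S'.powerset).image (fun S'' => (fC γ lc ec S'').card)) ⊆
          (S.powerset).image (fun S'' => (fC γ lc ec S'').card) := by
        intro v hv
        rcases Finset.mem_insert.mp hv with rfl | hv
        · exact Finset.mem_image.mpr ⟨S, Finset.mem_powerset_self S, rfl⟩
        · rw [Finset.mem_image] at hv ⊢
          obtain ⟨S'', hS'', h⟩ := hv
          rw [Finset.mem_powerset] at hS''
          exact ⟨S'', Finset.mem_powerset.mpr (hS''.trans hS'S.subset), h⟩
      calc S.card + 1 = S'.card + 1 + 1 := by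
            rw [Finset.card_erase_of_mem ha]
            have := Finset.card_pos.mpr ⟨a, ha⟩
            omega
        _ ≤ ((S'.powerset).image (fun S'' => (fC γ lc ec S'').card)).card + 1 := by omega
        _ = (insert (fC γ lc ec S).card
              ((S'.powerset).image (fun S'' => (fC γ lc ec S'').card))).card := by
            rw [Finset.card_insert_of_notMem hnotmem]
        _ ≤ _ := Finset.card_le_card hsub2

/-- Double counting: if no colour lies in three different `new` sets, the sum of
their sizes is at most twice the size of their union. -/
lemma sum_card_le_two_mul (S : Finset ℕ) (new : ℕ → Finset ℕ)
    (h : ∀ δ : ℕ, ∀ a ∈ S, ∀ b ∈ S, ∀ c ∈ S,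
      δ ∈ new a → δ ∈ new b → δ ∈ new c → a = b ∨ a = c ∨ b = c) :
    ∑ a ∈ S, (new a).card ≤ 2 * (S.biUnion new).card := by
  classical
  set P : Finset (ℕ × ℕ) := S.biUnion (fun a => (new a).image (Prod.mk a)) with hP
  have hmemP : ∀ p : ℕ × ℕ, p ∈ P ↔ p.1 ∈ S ∧ p.2 ∈ new p.1 := by
    intro p
    simp only [hP, Finset.mem_biUnion, Finset.mem_image]
    constructor
    · rintro ⟨a, haS, x, hx, rfl⟩
      exact ⟨haS, hx⟩
    · rintro ⟨h1, h2⟩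
      exact ⟨p.1, h1, p.2, h2, rfl⟩
  have hcardP : P.card = ∑ a ∈ S, (new a).card := by
    rw [hP, Finset.card_biUnion]
    · exact Finset.sum_congr rfl (fun a _ => Finset.card_image_of_injective _
        (fun x y hxy => by simpa using hxy))
    · intro a _ b _ hab
      simp only [Finset.disjoint_left, Finset.mem_image]
      rintro ⟨x, y⟩ ⟨u, hu, hux⟩ ⟨v, hv, hvx⟩
      injection hux with e1 e2
      injection hvx with e3 e4
      exact hab (e1.trans e3.symm)
  have hfib : ∀ δ ∈ P.image Prod.snd, (P.filter (fun p => p.2 = δ)).card ≤ 2 := by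
    intro δ _
    by_contra hcon
    push_neg at hcon
    obtain ⟨p1, p2, p3, hp1, hp2, hp3, h12, h13, h23⟩ :=
      Finset.two_lt_card_iff.mp hcon
    rw [Finset.mem_filter, hmemP] at hp1 hp2 hp3
    have e1 : p1 = (p1.1, δ) := by rw [← hp1.2]
    have e2 : p2 = (p2.1, δ) := by rw [← hp2.2]
    have e3 : p3 = (p3.1, δ) := by rw [← hp3.2]
    have hd1 : δ ∈ new p1.1 := by rw [← hp1.2]; exact hp1.1.2
    have hd2 : δ ∈ new p2.1 := by rw [← hp2.2]; exact hp2.1.2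
    have hd3 : δ ∈ new p3.1 := by rw [← hp3.2]; exact hp3.1.2
    rcases h δ p1.1 hp1.1.1 p2.1 hp2.1.1 p3.1 hp3.1.1 hd1 hd2 hd3 with he | he | he
    · exact h12 (by rw [e1, e2, he])
    · exact h13 (by rw [e1, e3, he])
    · exact h23 (by rw [e2, e3, he])
  have h1 : P.card ≤ 2 * (P.image Prod.snd).card :=
    Finset.card_le_mul_card_image P 2 hfib
  have h2 : P.image Prod.snd ⊆ S.biUnion new := by
    intro δ hδ
    rw [Finset.mem_image] at hδ
    obtain ⟨p, hp, hpd⟩ := hδ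
    rw [hmemP] at hp
    rw [Finset.mem_biUnion]
    exact ⟨p.1, hp.1, by rw [← hpd]; exact hp.2⟩
  calc ∑ a ∈ S, (new a).card = P.card := hcardP.symm
    _ ≤ 2 * (P.image Prod.snd).card := h1
    _ ≤ 2 * (S.biUnion new).card := by
        have := Finset.card_le_card h2
        omega

/-- Multiplicity: a colour can be `new` for at most two vertices. -/
lemma mult_le_two {S : Finset ℕ} {δ a b c : ℕ} (ha : a ∈ S) (hb : b ∈ S) (hc : c ∈ S)
    (hna : δ ∈ fC γ lc ec S \ fC γ lc ec (S.erase a))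
    (hnb : δ ∈ fC γ lc ec S \ fC γ lc ec (S.erase b))
    (hnc : δ ∈ fC γ lc ec S \ fC γ lc ec (S.erase c)) :
    a = b ∨ a = c ∨ b = c := by
  rw [Finset.mem_sdiff] at hna hnb hnc
  have neg : ∀ e : ℕ, δ ∉ fC γ lc ec (S.erase e) →
      (∀ x ∈ S, lc x = δ → x = e) ∧
      (∀ x ∈ S, ∀ y ∈ S, x ≠ y → ec x y = δ → x = e ∨ y = e) := by
    intro e hno
    constructor
    · intro x hx hlcx
      by_contra hxe
      exact hno ((mem_fC γ lc ec).mpr (Or.inr (Or.inl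
        ⟨x, Finset.mem_erase.mpr ⟨hxe, hx⟩, hlcx⟩)))
    · intro x hx y hy hne hecxy
      by_contra hcon
      push_neg at hcon
      exact hno ((mem_fC γ lc ec).mpr (Or.inr (Or.inr
        ⟨x, Finset.mem_erase.mpr ⟨hcon.1, hx⟩, y, Finset.mem_erase.mpr ⟨hcon.2, hy⟩,
         hne, hecxy⟩)))
  have nega := neg a hna.2
  have negb := neg b hnb.2
  have negc := neg c hnc.2
  rcases (mem_fC γ lc ec).mp hna.1 with h1 | ⟨x, hx, h1⟩ | ⟨x, hx, y, hy, hne, h1⟩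
  · exact absurd ((mem_fC γ lc ec).mpr (Or.inl h1)) hna.2
  · exact Or.inl ((nega.1 x hx h1).symm.trans (negb.1 x hx h1))
  · rcases nega.2 x hx y hy hne h1 with rfl | rfl
    · rcases negb.2 x hx y hy hne h1 with rfl | rfl
      · exact Or.inl rfl
      · rcases negc.2 x hx y hy hne h1 with rfl | rfl
        · exact Or.inr (Or.inl rfl)
        · exact Or.inr (Or.inr rfl)
    · rcases negb.2 x hx y hy hne h1 with rfl | rfl
      · rcases negc.2 x hx y hy hne h1 with rfl | rfl
        · exact Or.inr (Or.inr rfl)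
        · exact Or.inr (Or.inl rfl)
      · exact Or.inl rfl

/-- The key gap bound: every value `v` attained by `fC` on subsets of `T`
satisfies `2*v ≤ 2 + r*(r-1)`, where `r` is the number of attained values `≤ v`. -/
lemma gap_bound (hsym : ∀ x y, ec x y = ec y x) (T : Finset ℕ) :
    ∀ v ∈ (T.powerset).image (fun S' => (fC γ lc ec S').card),
      2 * v ≤ 2 + ((((T.powerset).image (fun S' => (fC γ lc ec S').card)).filter (· ≤ v)).card) *
        ((((T.powerset).image (fun S' => (fC γ lc ec S').card)).filter (· ≤ v)).card - 1) := by
  classical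
  set V := (T.powerset).image (fun S' => (fC γ lc ec S').card) with hV
  have hminV : ∀ v ∈ V, 1 ≤ v := by
    intro v hv
    rw [hV, Finset.mem_image] at hv
    obtain ⟨S', _, rfl⟩ := hv
    exact Finset.card_pos.mpr ⟨γ, gamma_mem_fC γ lc ec S'⟩
  have h1V : (1 : ℕ) ∈ V := by
    rw [hV, Finset.mem_image]
    exact ⟨∅, Finset.empty_mem_powerset T, by rw [fC_empty]; rfl⟩
  intro v
  induction v using Nat.strong_induction_on with
  | _ v ih =>
  intro hv
  have hv1 : 1 ≤ v := hminV v hv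
  rcases eq_or_lt_of_le hv1 with rfl | hv2
  · calc 2 * 1 = 2 := rfl
      _ ≤ 2 + _ := Nat.le_add_right _ _
  · -- v ≥ 2 : there is a previous value
    have hWne : (V.filter (· < v)).Nonempty := ⟨1, Finset.mem_filter.mpr ⟨h1V, hv2⟩⟩
    set v' := (V.filter (· < v)).max' hWne with hv'def
    have hv'mem' : v' ∈ V.filter (· < v) := (V.filter (· < v)).max'_mem hWne
    have hv'V : v' ∈ V := (Finset.mem_filter.mp hv'mem').1
    have hv'lt : v' < v := (Finset.mem_filter.mp hv'mem').2
    have hnext : ∀ w ∈ V, v' < w → v ≤ w := by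
      intro w hw hvw
      by_contra hcon
      push_neg at hcon
      exact absurd ((V.filter (· < v)).le_max' w (Finset.mem_filter.mpr ⟨hw, hcon⟩))
        (not_le.mpr hvw)
    set j := (V.filter (· ≤ v')).card with hj
    have hj1 : 1 ≤ j := by
      rw [hj]
      exact Finset.card_pos.mpr ⟨v', Finset.mem_filter.mpr ⟨hv'V, le_refl v'⟩⟩
    have hrv : (V.filter (· ≤ v)).card = j + 1 := by
      have hseteq : V.filter (· ≤ v) = insert v (V.filter (· ≤ v')) := by
        ext w
        simp only [Finset.mem_insert, Finset.mem_filter]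
        constructor
        · rintro ⟨hwV, hwv⟩
          rcases eq_or_lt_of_le hwv with he | hwlt
          · exact Or.inl he
          · refine Or.inr ⟨hwV, ?_⟩
            by_contra hcon
            push_neg at hcon
            exact absurd (hnext w hwV hcon) (not_le.mpr hwlt)
        · rintro (he | ⟨hwV, hwv⟩)
          · rw [he]
            exact ⟨hv, le_refl v⟩
          · exact ⟨hwV, hwv.trans hv'lt.le⟩
      have hvnot : v ∉ V.filter (· ≤ v') := fun hmem =>
        absurd (Finset.mem_filter.mp hmem).2 (not_le.mpr hv'lt)
      rw [hseteq, Finset.card_insert_of_notMem hvnot]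
    have hIH := ih v' hv'lt hv'V
    rw [← hj] at hIH
    have hv'ge1 : 1 ≤ v' := hminV v' hv'V
    -- main gap step : v ≤ v' + j
    have hgap : v ≤ v' + j := by
      by_contra hcon
      push_neg at hcon
      -- minimal subset with value > v'
      have hPne : (T.powerset.filter (fun S' => v' < (fC γ lc ec S').card)).Nonempty := by
        rw [hV, Finset.mem_image] at hv
        obtain ⟨Sv, hSv, hSveq⟩ := hv
        exact ⟨Sv, Finset.mem_filter.mpr ⟨hSv, by rw [hSveq]; exact hv'lt⟩⟩
      obtain ⟨S, hSP, hSmin⟩ := Finset.exists_min_image _ Finset.card hPne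
      rw [Finset.mem_filter] at hSP
      obtain ⟨hST, hSgt⟩ := hSP
      rw [Finset.mem_powerset] at hST
      have hSV : (fC γ lc ec S).card ∈ V := by
        rw [hV, Finset.mem_image]
        exact ⟨S, Finset.mem_powerset.mpr hST, rfl⟩
      have hSbig : v' + j < (fC γ lc ec S).card :=
        lt_of_lt_of_le hcon (hnext _ hSV hSgt)
      have hproper : ∀ S' ⊆ T, S'.card < S.card → (fC γ lc ec S').card ≤ v' := by
        intro S' hS'T hcard
        by_contra hcon2
        push_neg at hcon2
        exact absurd (hSmin S' (Finset.mem_filter.mpr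
          ⟨Finset.mem_powerset.mpr hS'T, hcon2⟩)) (not_le.mpr hcard)
      set new : ℕ → Finset ℕ := fun a => fC γ lc ec S \ fC γ lc ec (S.erase a) with hnew
      have herase : ∀ a ∈ S, (fC γ lc ec (S.erase a)).card ≤ v' := by
        intro a ha
        exact hproper _ ((Finset.erase_subset a S).trans hST)
          (Finset.card_lt_card (Finset.erase_ssubset ha))
      have hnewcard : ∀ a ∈ S,
          (new a).card = (fC γ lc ec S).card - (fC γ lc ec (S.erase a)).card := by
        intro a ha
        rw [hnew]
        exact Finset.card_sdiff_of_subset (fC_mono γ lc ec (Finset.erase_subset a S))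
      have hnewlb : ∀ a ∈ S, j + 1 ≤ (new a).card := by
        intro a ha
        have h1 := herase a ha
        have h2 := hnewcard a ha
        omega
      have hnewub : ∀ a ∈ S, (new a).card ≤ S.card := by
        intro a ha
        have hsub : new a ⊆ insert (lc a) ((S.erase a).image (ec a)) := by
          intro δ hδ
          rw [hnew, Finset.mem_sdiff] at hδ
          have : δ ∈ fC γ lc ec (S.erase a) ∪ insert (lc a) ((S.erase a).image (ec a)) := by
            apply fC_insert_subset γ lc ec hsym
            rw [Finset.insert_erase ha]
            exact hδ.1
          rcases Finset.mem_union.mp this with h | h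
          · exact absurd h hδ.2
          · exact h
        calc (new a).card ≤ _ := Finset.card_le_card hsub
          _ ≤ ((S.erase a).image (ec a)).card + 1 := Finset.card_insert_le _ _
          _ ≤ (S.erase a).card + 1 := by
              have := Finset.card_image_le (s := S.erase a) (f := ec a)
              omega
          _ = S.card := by
              rw [Finset.card_erase_of_mem ha]
              have := Finset.card_pos.mpr ⟨a, ha⟩
              omega
      have hScard : j + 1 ≤ S.card := by
        have hSne : S.Nonempty := by
          rcases Finset.eq_empty_or_nonempty S with he | h
          · exfalso
            rw [he, fC_empty] at hSgt
            simp only [Finset.card_singleton] at hSgt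
            have := hminV v' hv'V
            omega
          · exact h
        obtain ⟨a, ha⟩ := hSne
        exact (hnewlb a ha).trans (hnewub a ha)
      -- rigidity subcase, as a reusable fact
      have caseA : (∀ a ∈ S, (new a).card = S.card) → False := by
        intro hrig
        have hlcnot : ∀ a ∈ S, lc a ∉ fC γ lc ec (S.erase a) := by
          intro a ha
          have hsub : new a ⊆ insert (lc a) ((S.erase a).image (ec a)) := by
            intro δ hδ
            rw [hnew, Finset.mem_sdiff] at hδ
            have : δ ∈ fC γ lc ec (S.erase a) ∪ insert (lc a) ((S.erase a).image (ec a)) := by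
              apply fC_insert_subset γ lc ec hsym
              rw [Finset.insert_erase ha]
              exact hδ.1
            rcases Finset.mem_union.mp this with h | h
            · exact absurd h hδ.2
            · exact h
          have hcards : (insert (lc a) ((S.erase a).image (ec a))).card ≤ (new a).card := by
            rw [hrig a ha]
            calc (insert (lc a) ((S.erase a).image (ec a))).card
                ≤ ((S.erase a).image (ec a)).card + 1 := Finset.card_insert_le _ _
              _ ≤ (S.erase a).card + 1 := by
                  have := Finset.card_image_le (s := S.erase a) (f := ec a)
                  omega
              _ = S.card := by
                  rw [Finset.card_erase_of_mem ha]
                  have := Finset.card_pos.mpr ⟨a, ha⟩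
                  omega
          have heq : new a = insert (lc a) ((S.erase a).image (ec a)) :=
            Finset.eq_of_subset_of_card_le hsub hcards
          have : lc a ∈ new a := by
            rw [heq]
            exact Finset.mem_insert_self _ _
          rw [hnew, Finset.mem_sdiff] at this
          exact this.2
        have hchain := chain_lemma γ lc ec S hlcnot
        have hsub3 : (S.powerset).image (fun S' => (fC γ lc ec S').card) ⊆
            insert (fC γ lc ec S).card (V.filter (· ≤ v')) := by
          intro w hw
          rw [Finset.mem_image] at hw
          obtain ⟨S', hS', rfl⟩ := hw
          rw [Finset.mem_powerset] at hS'
          rcases eq_or_lt_of_le (Finset.card_le_card hS') with he | hlt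
          · have : S' = S := Finset.eq_of_subset_of_card_le hS' (le_of_eq he.symm)
            rw [this]
            exact Finset.mem_insert_self _ _
          · refine Finset.mem_insert_of_mem (Finset.mem_filter.mpr ⟨?_, ?_⟩)
            · rw [hV, Finset.mem_image]
              exact ⟨S', Finset.mem_powerset.mpr (hS'.trans hST), rfl⟩
            · exact hproper S' (hS'.trans hST) hlt
        have hcard3 := Finset.card_le_card hsub3
        have hcard4 := Finset.card_insert_le (fC γ lc ec S).card (V.filter (· ≤ v'))
        rw [← hj] at hcard4
        omega
      rcases eq_or_lt_of_le hScard with hSeq | hSgt2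
      · -- |S| = j+1 : all new's are full, rigid
        exact caseA (fun a ha => le_antisymm (hnewub a ha) (by rw [← hSeq]; exact hnewlb a ha))
      · -- |S| ≥ j+2 : double counting
        have hmult := sum_card_le_two_mul S new (fun δ a ha b hb c hc hda hdb hdc =>
          mult_le_two γ lc ec ha hb hc hda hdb hdc)
        have hsumlb : S.card * (j + 1) ≤ ∑ a ∈ S, (new a).card := by
          calc S.card * (j+1) = ∑ _a ∈ S, (j+1) := by rw [Finset.sum_const, smul_eq_mul]
            _ ≤ ∑ a ∈ S, (new a).card := Finset.sum_le_sum hnewlb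
        have hbiU : (S.biUnion new).card ≤ (fC γ lc ec S).card := by
          apply Finset.card_le_card
          intro δ hδ
          rw [Finset.mem_biUnion] at hδ
          obtain ⟨a, _, hδ⟩ := hδ
          rw [hnew, Finset.mem_sdiff] at hδ
          exact hδ.1
        have hgSub : (fC γ lc ec S).card ≤ v' + S.card := by
          have hSne : S.Nonempty := Finset.card_pos.mp (by omega)
          obtain ⟨a, ha⟩ := hSne
          have := hnewcard a ha
          have := herase a ha
          have := hnewub a ha
          omega
        -- S.card * (j+1) ≤ 2*(v' + S.card)  ⟹  S.card*(j-1) ≤ 2*v'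
        have hkey : S.card * (j + 1) ≤ 2 * (v' + S.card) := by
          calc S.card * (j+1) ≤ ∑ a ∈ S, (new a).card := hsumlb
            _ ≤ 2 * (S.biUnion new).card := hmult
            _ ≤ 2 * (fC γ lc ec S).card := Nat.mul_le_mul_left 2 hbiU
            _ ≤ 2 * (v' + S.card) := Nat.mul_le_mul_left 2 hgSub
        rcases Nat.lt_or_ge j 3 with hj3 | hj3
        · interval_cases j
          · -- j = 1 : v' = 1, all proper subsets are {γ}
            have hv'1 : v' = 1 := by omega
            have hfCer : ∀ a ∈ S, fC γ lc ec (S.erase a) = {γ} := by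
              intro a ha
              have h1 := herase a ha
              rw [hv'1] at h1
              have h2 : γ ∈ fC γ lc ec (S.erase a) := gamma_mem_fC γ lc ec _
              have h3 : ({γ} : Finset ℕ) ⊆ fC γ lc ec (S.erase a) :=
                Finset.singleton_subset_iff.mpr h2
              exact (Finset.eq_of_subset_of_card_le h3 (by simpa using h1)).symm
            obtain ⟨a, b, c, ha, hb, hc, hab, hac, hbc⟩ :=
              Finset.two_lt_card_iff.mp (show 2 < S.card by omega)
            have hnane : (new a).Nonempty := Finset.card_pos.mp (by
              have := hnewlb a ha; omega)
            obtain ⟨δ, hδ⟩ := hnane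
            have hδa : δ ∈ fC γ lc ec S \ fC γ lc ec (S.erase a) := hδ
            have hδb : δ ∈ fC γ lc ec S \ fC γ lc ec (S.erase b) := by
              rw [Finset.mem_sdiff] at hδa ⊢
              refine ⟨hδa.1, ?_⟩
              rw [hfCer b hb]
              rw [hfCer a ha] at hδa
              exact hδa.2
            have hδc : δ ∈ fC γ lc ec S \ fC γ lc ec (S.erase c) := by
              rw [Finset.mem_sdiff] at hδa ⊢
              refine ⟨hδa.1, ?_⟩
              rw [hfCer c hc]
              rw [hfCer a ha] at hδa
              exact hδa.2
            rcases mult_le_two γ lc ec ha hb hc hδa hδb hδc with h | h | h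
            · exact hab h
            · exact hac h
            · exact hbc h
          · -- j = 2 : forces |S| = 4 and rigidity
            have hv'2 : v' = 2 := by
              have h2le : 2 ≤ v' := by
                by_contra hcon2
                push_neg at hcon2
                have hv'1 : v' = 1 := by omega
                have : V.filter (· ≤ v') ⊆ {1} := by
                  intro w hw
                  rw [Finset.mem_filter] at hw
                  have := hminV w hw.1
                  rw [Finset.mem_singleton]
                  omega
                have := Finset.card_le_card this
                simp only [Finset.card_singleton] at this
                omega
              omega
            have hS4 : S.card = 4 := by
              rw [hv'2] at hkey
              omega
            have hgS6 : (fC γ lc ec S).card = 6 := by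
              have h1 : 12 ≤ ∑ a ∈ S, (new a).card := by
                have h0 := hsumlb
                rw [hS4] at h0
                omega
              have h2 : 12 ≤ 2 * (fC γ lc ec S).card := by
                calc 12 ≤ ∑ a ∈ S, (new a).card := h1
                  _ ≤ 2 * (S.biUnion new).card := hmult
                  _ ≤ 2 * (fC γ lc ec S).card := by omega
              rw [hv'2, hS4] at hgSub
              omega
            apply caseA
            intro a ha
            have h1 := hnewcard a ha
            have h2 := herase a ha
            have h3 := hnewub a ha
            rw [hv'2] at h2
            rw [hgS6] at h1
            rw [hS4] at h3 ⊢
            omega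
        · -- j ≥ 3 : arithmetic contradiction
          have hc2 : j + 2 ≤ S.card := hSgt2
          obtain ⟨m, hm⟩ : ∃ m, j = m + 3 := ⟨j - 3, by omega⟩
          set c := S.card with hcdef
          have e0 : c * (m + 2) + 2 * c ≤ 2 * v' + 2 * c := by
            calc c * (m + 2) + 2 * c = c * (j + 1) := by rw [hm]; ring
              _ ≤ 2 * (v' + c) := hkey
              _ = 2 * v' + 2 * c := by ring
          have e1 : c * (m + 2) ≤ 2 * v' := le_of_add_le_add_right e0
          have e2 : (m + 5) * (m + 2) ≤ c * (m + 2) :=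
            Nat.mul_le_mul_right _ (by omega)
          have hIH' : 2 * v' ≤ 2 + (m + 3) * (m + 2) := by
            have h := hIH
            rw [hm] at h
            simpa using h
          have efin : (m + 5) * (m + 2) = (m + 3) * (m + 2) + 2 * (m + 2) := by ring
          linarith
    -- conclude from the gap step
    rw [hrv]
    have hexp : (j + 1) * (j + 1 - 1) = j * (j - 1) + 2 * j := by
      obtain ⟨i, hi⟩ : ∃ i, j = i + 1 := ⟨j - 1, by omega⟩
      rw [hi]
      simp only [Nat.add_sub_cancel]
      ring
    rw [hexp]
    linarith

end Fin

lemma two_of_infinite {Y : Set ℕ} (hY : Y.Infinite) :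
    ∃ y1 ∈ Y, ∃ y2 ∈ Y, y1 ≠ y2 := by
  obtain ⟨y1, hy1⟩ := hY.nonempty
  obtain ⟨y2, hy2⟩ := (hY.diff (Set.finite_singleton y1)).nonempty
  exact ⟨y1, hy1, y2, hy2.1, fun h => hy2.2 (by rw [h]; rfl)⟩

def colourSet' (Δ : ℕ → ℕ → ℕ) (X : Set ℕ) : Set ℕ :=
  {c | ∃ x ∈ X, ∃ y ∈ X, x ≠ y ∧ edgeCol Δ x y = c}

theorem lower_bound (n k : ℕ) (hn : 2 ≤ n) (hk : k = n * (n - 1) / 2 + 2)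
    (Δ : ℕ → ℕ → ℕ)
    (hcol : ∀ x y : ℕ, x ≠ y → edgeCol Δ x y ∈ Finset.Icc 1 k)
    (hsurj : ∀ c ∈ Finset.Icc 1 k, ∃ x y : ℕ, x ≠ y ∧ edgeCol Δ x y = c)
    (F : Set ℕ)
    (hF : F = {m | m ∈ Finset.Icc 1 k ∧
      ∃ X : Set ℕ, X.Infinite ∧ (colourSet' Δ X).ncard = m}) :
    n + 1 ≤ F.ncard := by
  classical
  -- Ramsey: infinite monochromatic set
  obtain ⟨M, γ, hM, hmono⟩ := ramsey Δ k hcol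
  -- representatives of each colour
  choose! u v huv hcolc using hsurj
  set T : Finset ℕ := (Finset.Icc 1 k).biUnion (fun c => {u c, v c}) with hT
  -- monochromatic links
  obtain ⟨Y, lc, hYinf, hYM, hYT, hlc⟩ := links Δ k hcol M hM T
  set ec : ℕ → ℕ → ℕ := edgeCol Δ with hec
  have hsym : ∀ x y, ec x y = ec y x := fun x y => edgeCol_symm Δ x y
  -- the colour set of `Y ∪ S`
  have hcs : ∀ S : Finset ℕ, S ⊆ T →
      colourSet' Δ (Y ∪ ↑S) = ↑(fC γ lc ec S) := by
    intro S hST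
    ext c
    simp only [colourSet', Set.mem_setOf_eq, Finset.coe_insert, Set.mem_union,
      Finset.mem_coe]
    constructor
    · rintro ⟨x, hx, y, hy, hne, rfl⟩
      rw [mem_fC]
      rcases hx with hx | hx
      · rcases hy with hy | hy
        · exact Or.inl (hmono x (hYM hx) y (hYM hy) hne)
        · refine Or.inr (Or.inl ⟨y, hy, ?_⟩)
          rw [edgeCol_symm]
          exact (hlc y (hST hy) x hx).symm
      · rcases hy with hy | hy
        · exact Or.inr (Or.inl ⟨x, hx, (hlc x (hST hx) y hy).symm⟩)
        · exact Or.inr (Or.inr ⟨x, hx, y, hy, hne, rfl⟩)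
    · intro hc
      rw [mem_fC] at hc
      rcases hc with rfl | ⟨x, hx, rfl⟩ | ⟨x, hx, y, hy, hne, rfl⟩
      · obtain ⟨y1, hy1, y2, hy2, hne⟩ := two_of_infinite hYinf
        exact ⟨y1, Or.inl hy1, y2, Or.inl hy2, hne,
          hmono y1 (hYM hy1) y2 (hYM hy2) hne⟩
      · obtain ⟨y1, hy1⟩ := hYinf.nonempty
        exact ⟨x, Or.inr hx, y1, Or.inl hy1,
          fun h => hYT x (hST hx) (h ▸ hy1), hlc x (hST hx) y1 hy1⟩
      · exact ⟨x, Or.inr hx, y, Or.inr hy, hne, rfl⟩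
  -- fC values are in Icc 1 k
  have hfCicc : ∀ S : Finset ℕ, S ⊆ T → fC γ lc ec S ⊆ Finset.Icc 1 k := by
    intro S hST δ hδ
    rw [mem_fC] at hδ
    rcases hδ with rfl | ⟨x, hx, rfl⟩ | ⟨x, hx, y, hy, hne, rfl⟩
    · obtain ⟨y1, hy1, y2, hy2, hne⟩ := two_of_infinite hYinf
      rw [← hmono y1 (hYM hy1) y2 (hYM hy2) hne]
      exact hcol y1 y2 hne
    · obtain ⟨y1, hy1⟩ := hYinf.nonempty
      rw [← hlc x (hST hx) y1 hy1]
      exact hcol x y1 (fun h => hYT x (hST hx) (h ▸ hy1))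
    · exact hcol x y hne
  -- fC T = Icc 1 k
  have hfCT : fC γ lc ec T = Finset.Icc 1 k := by
    apply Finset.Subset.antisymm (hfCicc T (le_refl T))
    intro c hc
    rw [mem_fC]
    have hu : u c ∈ T := by
      rw [hT, Finset.mem_biUnion]
      exact ⟨c, hc, by simp⟩
    have hv : v c ∈ T := by
      rw [hT, Finset.mem_biUnion]
      exact ⟨c, hc, by simp⟩
    exact Or.inr (Or.inr ⟨u c, hu, v c, hv, huv c hc, hcolc c hc⟩)
  have hk2 : 2 ≤ k := by omega
  have hgT : (fC γ lc ec T).card = k := by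
    rw [hfCT, Nat.card_Icc]
    omega
  set V := (T.powerset).image (fun S' => (fC γ lc ec S').card) with hV
  -- V ⊆ F
  have hVF : ↑V ⊆ F := by
    intro w hw
    rw [Finset.mem_coe, hV, Finset.mem_image] at hw
    obtain ⟨S, hS, rfl⟩ := hw
    rw [Finset.mem_powerset] at hS
    rw [hF]
    constructor
    · rw [Finset.mem_Icc]
      constructor
      · exact Finset.card_pos.mpr ⟨γ, gamma_mem_fC γ lc ec S⟩
      · calc (fC γ lc ec S).card ≤ (Finset.Icc 1 k).card :=
            Finset.card_le_card (hfCicc S hS)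
          _ = k := by rw [Nat.card_Icc]; omega
    · exact ⟨Y ∪ ↑S, hYinf.mono Set.subset_union_left,
        by rw [hcs S hS, Set.ncard_coe_finset]⟩
  -- apply the gap bound at v = k
  have hkV : k ∈ V := by
    rw [hV, Finset.mem_image]
    exact ⟨T, Finset.mem_powerset_self T, hgT⟩
  have hgap := gap_bound γ lc ec hsym T k hkV
  have hfilt : V.filter (· ≤ k) = V := by
    apply Finset.filter_true_of_mem
    intro w hw
    rw [hV, Finset.mem_image] at hw
    obtain ⟨S, hS, rfl⟩ := hw
    rw [Finset.mem_powerset] at hS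
    calc (fC γ lc ec S).card ≤ (Finset.Icc 1 k).card :=
        Finset.card_le_card (hfCicc S hS)
      _ = k := by rw [Nat.card_Icc]; omega
  rw [← hV, hfilt] at hgap
  -- arithmetic: V.card ≥ n + 1
  have hdvd : 2 ∣ n * (n - 1) := by
    rcases Nat.even_or_odd n with he | ho
    · exact Dvd.dvd.mul_right he.two_dvd _
    · have : Even (n - 1) := by
        rcases ho with ⟨m, hm⟩
        exact ⟨m, by omega⟩
      exact Dvd.dvd.mul_left this.two_dvd _
  have h2k : 2 * k = n * (n - 1) + 4 := by
    rw [hk]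
    have := Nat.div_mul_cancel hdvd
    omega
  by_contra hcon
  push_neg at hcon
  have hVcard : V.card ≤ (F.ncard) := by
    have hFfin : F.Finite := by
      rw [hF]
      apply Set.Finite.subset (Finset.Icc 1 k).finite_toSet
      intro m hm
      exact hm.1
    calc V.card = (↑V : Set ℕ).ncard := (Set.ncard_coe_finset V).symm
      _ ≤ F.ncard := Set.ncard_le_ncard hVF hFfin
  have hVn : V.card ≤ n := by omega
  have hmul : V.card * (V.card - 1) ≤ n * (n - 1) :=
    Nat.mul_le_mul hVn (by omega)
  linarith

/-! ### The extremal construction -/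

def tN (m : ℕ) : ℕ := m * (m - 1) / 2

lemma tN_two_dvd (m : ℕ) : 2 ∣ m * (m - 1) := by
  rcases Nat.even_or_odd m with he | ho
  · exact Dvd.dvd.mul_right he.two_dvd _
  · have : Even (m - 1) := by
      rcases ho with ⟨i, hi⟩
      exact ⟨i, by omega⟩
    exact Dvd.dvd.mul_left this.two_dvd _

lemma tN_succ (m : ℕ) : tN (m + 1) = tN m + m := by
  unfold tN
  have h1 : (m + 1) * (m + 1 - 1) = m * (m - 1) + m * 2 := by
    cases m with
    | zero => rfl
    | succ i => simp only [Nat.add_sub_cancel]; ring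
  rw [h1]
  omega

lemma tN_zero : tN 0 = 0 := rfl
lemma tN_one : tN 1 = 0 := rfl

lemma tN_mono : Monotone tN := by
  apply monotone_nat_of_le_succ
  intro m
  rw [tN_succ]
  omega

lemma tN_strict {a b : ℕ} (ha : 1 ≤ a) (hab : a < b) : tN a < tN b := by
  have h1 : tN a < tN (a + 1) := by rw [tN_succ]; omega
  exact lt_of_lt_of_le h1 (tN_mono hab)

def encP (a b : ℕ) : ℕ := tN b + a + 1

lemma encP_le {a b n : ℕ} (hab : a < b) (hbn : b < n) : encP a b ≤ tN n := by
  unfold encP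
  have h1 : tN b + a + 1 ≤ tN (b + 1) := by rw [tN_succ]; omega
  exact h1.trans (tN_mono hbn)

lemma encP_inj {a b a' b' : ℕ} (hab : a < b) (hab' : a' < b')
    (h : encP a b = encP a' b') : a = a' ∧ b = b' := by
  unfold encP at h
  rcases lt_trichotomy b b' with hbb | hbb | hbb
  · exfalso
    have h1 : tN b + a + 1 ≤ tN (b + 1) := by rw [tN_succ]; omega
    have h2 : tN (b + 1) ≤ tN b' := tN_mono hbb
    omega
  · constructor
    · rw [hbb] at h; omega
    · exact hbb
  · exfalso
    have h1 : tN b' + a' + 1 ≤ tN (b' + 1) := by rw [tN_succ]; omega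
    have h2 : tN (b' + 1) ≤ tN b := tN_mono hbb
    omega

lemma encP_surj (n : ℕ) : ∀ c, 1 ≤ c → c ≤ tN n → ∃ a b, a < b ∧ b < n ∧ encP a b = c := by
  induction n with
  | zero => intro c h1 h2; rw [tN_zero] at h2; omega
  | succ m ih =>
    intro c h1 h2
    rcases le_or_gt c (tN m) with h | h
    · obtain ⟨a, b, hab, hbm, he⟩ := ih c h1 h
      exact ⟨a, b, hab, hbm.trans (Nat.lt_succ_self m), he⟩
    · rw [tN_succ] at h2
      refine ⟨c - tN m - 1, m, by omega, Nat.lt_succ_self m, ?_⟩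
      unfold encP
      omega

def consC (n : ℕ) : ℕ → ℕ → ℕ := fun a b =>
  if a % n = b % n then 1 else if max a b < n then 2 + encP (min a b) (max a b) else 2

lemma consC_symm (n a b : ℕ) : consC n a b = consC n b a := by
  unfold consC
  rcases eq_or_ne (a % n) (b % n) with h | h
  · rw [if_pos h, if_pos h.symm]
  · rw [if_neg h, if_neg (Ne.symm h), max_comm, min_comm]

lemma edgeCol_consC (n x y : ℕ) : edgeCol (consC n) x y = consC n x y := by
  unfold edgeCol
  rcases le_total x y with h | h
  · rw [min_eq_left h, max_eq_right h]
  · rw [min_eq_right h, max_eq_left h, consC_symm]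

/-- Value of the colouring in the three cases. -/
lemma consC_same {n x y : ℕ} (h : x % n = y % n) : consC n x y = 1 := by
  unfold consC; rw [if_pos h]

lemma consC_small {n x y : ℕ} (h : x % n ≠ y % n) (hx : x < n) (hy : y < n) :
    consC n x y = 2 + encP (min x y) (max x y) := by
  unfold consC
  rw [if_neg h, if_pos (by omega : max x y < n)]

lemma consC_big {n x y : ℕ} (h : x % n ≠ y % n) (hb : n ≤ max x y) :
    consC n x y = 2 := by
  unfold consC
  rw [if_neg h, if_neg (by omega)]

lemma consC_isColouring (n : ℕ) (hn : 2 ≤ n) (k : ℕ) (hk : k = tN n + 2) :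
    (∀ x y : ℕ, x ≠ y → edgeCol (consC n) x y ∈ Finset.Icc 1 k) ∧
    (∀ c ∈ Finset.Icc 1 k, ∃ x y : ℕ, x ≠ y ∧ edgeCol (consC n) x y = c) := by
  constructor
  · intro x y hxy
    rw [edgeCol_consC, Finset.mem_Icc]
    rcases eq_or_ne (x % n) (y % n) with h | h
    · rw [consC_same h]; omega
    · rcases lt_or_ge (max x y) n with hb | hb
      · rw [consC_small h (by omega) (by omega)]
        have hminmax : min x y < max x y := by
          rcases Nat.lt_or_ge x y with h' | h'
          · rw [min_eq_left h'.le, max_eq_right h'.le]; exact h'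
          · have : y ≠ x := fun hyx => hxy hyx.symm
            rw [min_eq_right h', max_eq_left h']; omega
        have := encP_le hminmax hb
        omega
      · rw [consC_big h hb]; omega
  · intro c hc
    rw [Finset.mem_Icc] at hc
    rcases eq_or_ne c 1 with rfl | hc1
    · refine ⟨0, n, by omega, ?_⟩
      rw [edgeCol_consC, consC_same (by simp)]
    · rcases eq_or_ne c 2 with rfl | hc2
      · refine ⟨1, n, by omega, ?_⟩
        rw [edgeCol_consC, consC_big ?_ (by omega)]
        rw [Nat.mod_self, Nat.mod_eq_of_lt (by omega)]
        omega
      · obtain ⟨a, b, hab, hbn, he⟩ := encP_surj n (c - 2) (by omega) (by omega)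
        refine ⟨a, b, by omega, ?_⟩
        rw [edgeCol_consC, consC_small ?_ (by omega) (by omega)]
        · rw [min_eq_left hab.le, max_eq_right hab.le, he]
          omega
        · rw [Nat.mod_eq_of_lt (by omega), Nat.mod_eq_of_lt hbn]
          omega

/-- The number of strictly increasing pairs from a finset. -/
lemma card_lt_pairs (s : Finset ℕ) :
    ((s ×ˢ s).filter fun p => p.1 < p.2).card = tN s.card := by
  classical
  set A := (s ×ˢ s).filter fun p => p.1 < p.2 with hA
  set B := (s ×ˢ s).filter fun p => p.2 < p.1 with hB
  have hcardAB : A.card = B.card := by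
    apply Finset.card_bij (fun p _ => (p.2, p.1))
    · intro p hp
      rw [hA, Finset.mem_filter, Finset.mem_product] at hp
      rw [hB, Finset.mem_filter, Finset.mem_product]
      exact ⟨⟨hp.1.2, hp.1.1⟩, hp.2⟩
    · intro p hp q hq hpq
      have h1 : p.2 = q.2 := congrArg Prod.fst hpq
      have h2 : p.1 = q.1 := congrArg Prod.snd hpq
      exact Prod.ext h2 h1
    · intro p hp
      rw [hB, Finset.mem_filter, Finset.mem_product] at hp
      refine ⟨(p.2, p.1), ?_, rfl⟩
      rw [hA, Finset.mem_filter, Finset.mem_product]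
      exact ⟨⟨hp.1.2, hp.1.1⟩, hp.2⟩
  have hunion : s.offDiag = A ∪ B := by
    ext p
    rw [Finset.mem_offDiag]
    rw [Finset.mem_union, hA, hB, Finset.mem_filter, Finset.mem_filter,
      Finset.mem_product]
    constructor
    · rintro ⟨h1, h2, h3⟩
      rcases lt_or_gt_of_ne h3 with h | h
      · exact Or.inl ⟨⟨h1, h2⟩, h⟩
      · exact Or.inr ⟨⟨h1, h2⟩, h⟩
    · rintro (⟨⟨h1, h2⟩, h⟩ | ⟨⟨h1, h2⟩, h⟩)
      · exact ⟨h1, h2, by omega⟩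
      · exact ⟨h1, h2, by omega⟩
  have hdisj : Disjoint A B := by
    rw [Finset.disjoint_left]
    intro p hp hq
    rw [hA, Finset.mem_filter] at hp
    rw [hB, Finset.mem_filter] at hq
    omega
  have hoff : s.offDiag.card = s.card * s.card - s.card := Finset.offDiag_card s
  rw [hunion, Finset.card_union_of_disjoint hdisj] at hoff
  have hmm : s.card * s.card - s.card = s.card * (s.card - 1) := by
    cases s.card with
    | zero => simp
    | succ i => simp only [Nat.succ_sub_one]; ring_nf; omega
  unfold tN
  omega

lemma sameRes {n : ℕ} (hn : 0 < n) {X : Set ℕ} (hX : X.Infinite) :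
    ∃ x ∈ X, ∃ y ∈ X, x ≠ y ∧ x % n = y % n := by
  obtain ⟨c, hc⟩ := pigeon hX (fun x => x % n + 1) n
    (fun x _ => by
      show x % n + 1 ∈ Finset.Icc 1 n
      have := Nat.mod_lt x hn
      rw [Finset.mem_Icc]
      omega)
  obtain ⟨x, hx, y, hy, hxy⟩ := two_of_infinite hc
  refine ⟨x, hx.1, y, hy.1, hxy, ?_⟩
  have h1 : x % n + 1 = c := hx.2
  have h2 : y % n + 1 = c := hy.2
  omega

lemma consC_ncard_spread (n : ℕ) (hn : 2 ≤ n) (X : Set ℕ) (hX : X.Infinite)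
    [DecidablePred (· ∈ X)]
    (hspread : ∃ x ∈ X, ∃ y ∈ X, x % n ≠ y % n) :
    (colourSet' (consC n) X).ncard = 2 + tN ((Finset.range n).filter (· ∈ X)).card := by
  classical
  set Sm : Finset ℕ := (Finset.range n).filter (· ∈ X) with hSm
  set Cp : Finset ℕ :=
    ((Sm ×ˢ Sm).filter fun p => p.1 < p.2).image (fun p => 2 + encP p.1 p.2) with hCp
  have hset : colourSet' (consC n) X = ↑(insert 1 (insert 2 Cp)) := by
    ext c
    simp only [colourSet', Set.mem_setOf_eq, Finset.coe_insert, Set.mem_insert_iff,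
      Finset.mem_coe]
    constructor
    · rintro ⟨x, hx, y, hy, hne, rfl⟩
      rw [edgeCol_consC]
      rcases eq_or_ne (x % n) (y % n) with h | h
      · exact Or.inl (consC_same h)
      · rcases lt_or_ge (max x y) n with hb | hb
        · refine Or.inr (Or.inr ?_)
          rw [consC_small h (by omega) (by omega)]
          rw [hCp, Finset.mem_image]
          refine ⟨(min x y, max x y), ?_, rfl⟩
          rw [Finset.mem_filter, Finset.mem_product]
          have hmm : min x y < max x y := by
            rcases Nat.lt_or_ge x y with h' | h'
            · rw [min_eq_left h'.le, max_eq_right h'.le]; exact h'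
            · rw [min_eq_right h', max_eq_left h']; omega
          refine ⟨⟨?_, ?_⟩, hmm⟩
          · rw [hSm, Finset.mem_filter, Finset.mem_range]
            constructor
            · omega
            · show min x y ∈ X
              rcases le_total x y with h' | h'
              · rwa [min_eq_left h']
              · rwa [min_eq_right h']
          · rw [hSm, Finset.mem_filter, Finset.mem_range]
            constructor
            · omega
            · show max x y ∈ X
              rcases le_total x y with h' | h'
              · rwa [max_eq_right h']
              · rwa [max_eq_left h']
        · exact Or.inr (Or.inl (consC_big h hb))
    · intro hc
      rcases hc with rfl | rfl | hc
      · obtain ⟨x, hx, y, hy, hne, hres⟩ := sameRes (by omega : 0 < n) hX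
        exact ⟨x, hx, y, hy, hne, by rw [edgeCol_consC]; exact consC_same hres⟩
      · obtain ⟨x, hx, y, hy, hres⟩ := hspread
        obtain ⟨z, hz, hzgt⟩ := hX.exists_gt n
        have hw : ∃ w ∈ X, w % n ≠ z % n := by
          by_cases h1 : x % n = z % n
          · exact ⟨y, hy, fun h2 => hres (h1.trans h2.symm)⟩
          · exact ⟨x, hx, h1⟩
        obtain ⟨w, hwX, hwz⟩ := hw
        refine ⟨w, hwX, z, hz, fun h => hwz (by rw [h]), ?_⟩
        rw [edgeCol_consC]
        exact consC_big hwz (by omega)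
      · rw [hCp, Finset.mem_image] at hc
        obtain ⟨⟨a, b⟩, hab, rfl⟩ := hc
        rw [Finset.mem_filter, Finset.mem_product] at hab
        obtain ⟨⟨ha, hb⟩, hlt⟩ := hab
        rw [hSm, Finset.mem_filter, Finset.mem_range] at ha hb
        refine ⟨a, ha.2, b, hb.2, by omega, ?_⟩
        rw [edgeCol_consC, consC_small ?_ ha.1 hb.1]
        · rw [min_eq_left hlt.le, max_eq_right hlt.le]
        · rw [Nat.mod_eq_of_lt ha.1, Nat.mod_eq_of_lt hb.1]
          omega
  rw [hset, Set.ncard_coe_finset]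
  have hbound : True := trivial
  have hCpcard : Cp.card = tN Sm.card := by
    rw [hCp]
    rw [Finset.card_image_of_injOn, card_lt_pairs]
    intro p hp q hq hpq
    rw [Finset.mem_coe, Finset.mem_filter] at hp hq
    have hpq' : 2 + encP p.1 p.2 = 2 + encP q.1 q.2 := hpq
    have := encP_inj hp.2 hq.2 (by omega)
    exact Prod.ext this.1 this.2
  have h2Cp : 2 ∉ Cp := by
    rw [hCp, Finset.mem_image]
    rintro ⟨p, hp, hpe⟩
    unfold encP at hpe
    omega
  have h1Cp : (1 : ℕ) ∉ insert 2 Cp := by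
    rw [Finset.mem_insert]
    rintro (h | h)
    · omega
    · rw [hCp, Finset.mem_image] at h
      obtain ⟨p, hp, hpe⟩ := h
      unfold encP at hpe
      omega
  rw [Finset.card_insert_of_notMem h1Cp, Finset.card_insert_of_notMem h2Cp, hCpcard]
  omega

lemma consC_ncard (n : ℕ) (hn : 2 ≤ n) (X : Set ℕ) (hX : X.Infinite) :
    (colourSet' (consC n) X).ncard = 1 ∨
    ∃ m : ℕ, m ≤ n ∧ (colourSet' (consC n) X).ncard = 2 + tN m := by
  classical
  by_cases hspread : ∃ x ∈ X, ∃ y ∈ X, x % n ≠ y % n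
  · right
    refine ⟨((Finset.range n).filter (· ∈ X)).card, ?_,
      consC_ncard_spread n hn X hX hspread⟩
    calc ((Finset.range n).filter (· ∈ X)).card
        ≤ (Finset.range n).card := Finset.card_le_card (Finset.filter_subset _ _)
      _ = n := Finset.card_range n
  · left
    push_neg at hspread
    have hset : colourSet' (consC n) X = {1} := by
      ext c
      simp only [colourSet', Set.mem_setOf_eq, Set.mem_singleton_iff]
      constructor
      · rintro ⟨x, hx, y, hy, hne, rfl⟩
        rw [edgeCol_consC, consC_same (hspread x hx y hy)]
      · rintro rfl
        obtain ⟨x, hx, y, hy, hne, hres⟩ := sameRes (by omega : 0 < n) hX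
        exact ⟨x, hx, y, hy, hne, by rw [edgeCol_consC]; exact consC_same hres⟩
    rw [hset]
    exact Set.ncard_singleton 1

lemma attain_one (n : ℕ) (hn : 2 ≤ n) :
    ∃ X : Set ℕ, X.Infinite ∧ (colourSet' (consC n) X).ncard = 1 := by
  classical
  refine ⟨{x | x % n = 0}, ?_, ?_⟩
  · apply Set.infinite_of_injective_forall_mem (f := fun i : ℕ => i * n)
    · intro i j hij
      simp only at hij
      exact Nat.eq_of_mul_eq_mul_right (by omega) hij
    · intro i
      simp [Set.mem_setOf_eq, Nat.mul_mod_left]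
  · have hX : ({x : ℕ | x % n = 0}).Infinite := by
      apply Set.infinite_of_injective_forall_mem (f := fun i : ℕ => i * n)
      · intro i j hij
        simp only at hij
        exact Nat.eq_of_mul_eq_mul_right (by omega) hij
      · intro i
        simp [Set.mem_setOf_eq, Nat.mul_mod_left]
    have hset : colourSet' (consC n) {x | x % n = 0} = {1} := by
      ext c
      simp only [colourSet', Set.mem_setOf_eq, Set.mem_singleton_iff]
      constructor
      · rintro ⟨x, hx, y, hy, hne, rfl⟩
        rw [edgeCol_consC, consC_same (by rw [hx, hy])]
      · rintro rfl
        obtain ⟨x, hx, y, hy, hne, hres⟩ := sameRes (by omega : 0 < n) hX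
        exact ⟨x, hx, y, hy, hne, by rw [edgeCol_consC]; exact consC_same hres⟩
    rw [hset]
    exact Set.ncard_singleton 1

lemma attain_m (n : ℕ) (hn : 2 ≤ n) (m : ℕ) (hm1 : 1 ≤ m) (hmn : m ≤ n) :
    ∃ X : Set ℕ, X.Infinite ∧ (colourSet' (consC n) X).ncard = 2 + tN m := by
  classical
  set X : Set ℕ := ↑(Finset.range m) ∪ {x | x % n = 1 ∧ n ≤ x} with hXdef
  have hn1 : (n + 1) % n = 1 := by
    rw [Nat.add_mod_left n 1]
    exact Nat.mod_eq_of_lt (by omega)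
  have hinf2 : ({x : ℕ | x % n = 1 ∧ n ≤ x}).Infinite := by
    apply Set.infinite_of_injective_forall_mem (f := fun i : ℕ => n + 1 + i * n)
    · intro i j hij
      simp only at hij
      have : i * n = j * n := by omega
      exact Nat.eq_of_mul_eq_mul_right (by omega) this
    · intro i
      simp only [Set.mem_setOf_eq]
      constructor
      · rw [Nat.add_mul_mod_self_right]
        exact hn1
      · omega
  have hXinf : X.Infinite := hinf2.mono (Set.subset_union_right)
  have hspread : ∃ x ∈ X, ∃ y ∈ X, x % n ≠ y % n := by
    refine ⟨0, ?_, n + 1, ?_, ?_⟩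
    · rw [hXdef]
      left
      simp only [Finset.coe_range, Set.mem_Iio]
      omega
    · rw [hXdef]
      right
      exact ⟨hn1, by omega⟩
    · rw [Nat.zero_mod, hn1]
      omega
  have hSm : (Finset.range n).filter (· ∈ X) = Finset.range m := by
    ext x
    rw [Finset.mem_filter, Finset.mem_range, Finset.mem_range]
    constructor
    · rintro ⟨hxn, hxX⟩
      rw [hXdef] at hxX
      rcases hxX with h | h
      · simpa using h
      · exact absurd h.2 (by omega)
    · intro hxm
      refine ⟨by omega, ?_⟩
      rw [hXdef]
      left
      simp only [Finset.coe_range, Set.mem_Iio]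
      exact hxm
  refine ⟨X, hXinf, ?_⟩
  rw [consC_ncard_spread n hn X hXinf hspread, hSm, Finset.card_range]

lemma consC_FSet (n : ℕ) (hn : 2 ≤ n) (k : ℕ) (hk : k = tN n + 2) :
    ({m | m ∈ Finset.Icc 1 k ∧ ∃ X : Set ℕ, X.Infinite ∧
      (colourSet' (consC n) X).ncard = m} : Set ℕ).ncard = n + 1 := by
  classical
  set Ft : Finset ℕ := insert 1 ((Finset.Icc 1 n).image (fun m => 2 + tN m)) with hFt
  have hseteq : {m | m ∈ Finset.Icc 1 k ∧ ∃ X : Set ℕ, X.Infinite ∧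
      (colourSet' (consC n) X).ncard = m} = ↑Ft := by
    ext c
    simp only [Set.mem_setOf_eq, Finset.coe_insert, Set.mem_insert_iff, Finset.mem_coe,
      hFt, Finset.mem_insert]
    constructor
    · rintro ⟨hicc, X, hXinf, hval⟩
      rcases consC_ncard n hn X hXinf with h1 | ⟨m, hmn, h2⟩
      · exact Or.inl (by omega)
      · right
        rw [Finset.mem_image]
        refine ⟨max m 1, ?_, ?_⟩
        · rw [Finset.mem_Icc]
          omega
        · have : tN (max m 1) = tN m := by
            rcases Nat.eq_zero_or_pos m with rfl | hm
            · rfl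
            · rw [max_eq_left hm]
          omega
    · rintro (rfl | hc)
      · refine ⟨?_, attain_one n hn⟩
        rw [Finset.mem_Icc]
        omega
      · rw [Finset.mem_image] at hc
        obtain ⟨m, hm, rfl⟩ := hc
        rw [Finset.mem_Icc] at hm
        refine ⟨?_, attain_m n hn m hm.1 hm.2⟩
        rw [Finset.mem_Icc]
        have := tN_mono hm.2
        omega
  rw [hseteq, Set.ncard_coe_finset]
  have h1not : (1 : ℕ) ∉ (Finset.Icc 1 n).image (fun m => 2 + tN m) := by
    rw [Finset.mem_image]
    rintro ⟨m, _, hme⟩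
    omega
  have hinj : Set.InjOn (fun m => 2 + tN m) ↑(Finset.Icc 1 n) := by
    intro a ha b hb hab
    rw [Finset.coe_Icc, Set.mem_Icc] at ha hb
    simp only at hab
    by_contra hne
    rcases Nat.lt_or_ge a b with h | h
    · have := tN_strict ha.1 h
      omega
    · have hlt : b < a := by omega
      have := tN_strict hb.1 hlt
      omega
  rw [hFt, Finset.card_insert_of_notMem h1not, Finset.card_image_of_injOn hinj,
    Nat.card_Icc]
  omega

/-- For every `n ≥ 2`, `ψ(n(n-1)/2 + 2) = n + 1`: every surjective colouring
`Δ : ℕ^(2) ↠ [n(n-1)/2 + 2]` has `|F_Δ| ≥ n + 1`, and some such colouring has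
`|F_Δ| = n + 1`. -/
theorem psi_choose_add_two (n : ℕ) (hn : 2 ≤ n) :
    (∀ Δ : ℕ → ℕ → ℕ, IsColouring Δ (n * (n - 1) / 2 + 2) →
        n + 1 ≤ (FSet Δ (n * (n - 1) / 2 + 2)).ncard) ∧
    (∃ Δ : ℕ → ℕ → ℕ, IsColouring Δ (n * (n - 1) / 2 + 2) ∧
        (FSet Δ (n * (n - 1) / 2 + 2)).ncard = n + 1) ∧
    psi (n * (n - 1) / 2 + 2) = n + 1 := by
  set k := n * (n - 1) / 2 + 2 with hkdef
  have part1 : ∀ Δ : ℕ → ℕ → ℕ, IsColouring Δ k → n + 1 ≤ (FSet Δ k).ncard := by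
    intro Δ hΔ
    exact lower_bound n k hn hkdef Δ hΔ.1 hΔ.2 (FSet Δ k) rfl
  have hiscol : IsColouring (consC n) k :=
    consC_isColouring n hn k rfl
  have hncard : (FSet (consC n) k).ncard = n + 1 :=
    consC_FSet n hn k rfl
  refine ⟨part1, ⟨consC n, hiscol, hncard⟩, ?_⟩
  have hmem : n + 1 ∈ {m | ∃ Δ : ℕ → ℕ → ℕ, IsColouring Δ k ∧ (FSet Δ k).ncard = m} :=
    ⟨consC n, hiscol, hncard⟩
  apply le_antisymm
  · exact Nat.sInf_le hmem
  · obtain ⟨Δ, hΔ, heq⟩ := Nat.sInf_mem (⟨n + 1, hmem⟩ : Set.Nonempty _)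
    rw [psi, ← heq]
    exact part1 Δ hΔ
end

section
/- The set A = {k ∈ ℕ : there exist natural numbers a, b with k − 1 = ab and log k ≤ a ≤ b} has asymptotic density one, i.e., |A ∩ [N]|/N → 1 as N → ∞. -/
open Filter Real

def divA : Set ℕ := {k : ℕ | ∃ a b : ℕ, k - 1 = a * b ∧ Real.log k ≤ (a : ℝ) ∧ a ≤ b}

noncomputable def myg (N : ℕ) : ℝ :=
  (Real.log N + 1)/Real.sqrt N + 16*(Real.log N)^4/N
    + (4*Real.log 4) * ((1 + Real.log (Real.log N + 1))/Real.log N)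


lemma my_struct (L n : ℕ) (hL : 2 ≤ L) (hn : L ^ 4 ≤ n) :
    (∃ d, d ∣ n ∧ L ≤ d ∧ d * d ≤ n) ∨
    (∃ m p, p.Prime ∧ n = m * p ∧ 1 ≤ m ∧ m < L) := by
  have hn0 : 0 < n := lt_of_lt_of_le (by positivity) hn
  have h8 : 2 ^ 3 ≤ L ^ 3 := Nat.pow_le_pow_left hL 3
  have hLn : L < n := lt_of_lt_of_le (by nlinarith) hn
  set S : Finset ℕ := n.divisors.filter (· < L) with hS
  have h1S : 1 ∈ S := by
    simp [hS, Nat.one_mem_divisors, hn0.ne', lt_of_lt_of_le one_lt_two hL]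
  have hSne : S.Nonempty := ⟨1, h1S⟩
  set m := S.max' hSne with hm
  have hmS : m ∈ S := S.max'_mem hSne
  have hmdvd : m ∣ n := (Nat.mem_divisors.1 (Finset.mem_filter.1 hmS).1).1
  have hmL : m < L := by simpa using (Finset.mem_filter.1 hmS).2
  have hm1 : 1 ≤ m := Nat.pos_of_dvd_of_pos hmdvd hn0
  have hmn : m < n := lt_trans hmL hLn
  -- n/m ≥ 2
  have hnm2 : 2 ≤ n / m := by
    rcases hmdvd with ⟨t, ht⟩
    have ht2 : 2 ≤ t := by
      rcases t with _ | _ | t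
      · omega
      · omega
      · omega
    rw [ht, Nat.mul_div_cancel_left _ hm1]
    exact ht2
  set p := (n / m).minFac with hp
  have hpp : p.Prime := Nat.minFac_prime (by omega)
  have hpd : p ∣ n / m := Nat.minFac_dvd _
  have hmpdvd : m * p ∣ n := (Nat.dvd_div_iff_mul_dvd hmdvd).1 hpd
  have hLmp : L ≤ m * p := by
    by_contra hcon
    push_neg at hcon
    have : m * p ∈ S := by
      simp [hS, Nat.mem_divisors, hmpdvd, hn0.ne', hcon]
    have := S.le_max' _ this
    nlinarith [hpp.two_le]
  rcases lt_or_ge p L with hpL | hLp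
  · left
    refine ⟨m * p, hmpdvd, hLmp, ?_⟩
    have h1 : m * p < L * L := Nat.mul_lt_mul'' hmL hpL
    calc m * p * (m * p) ≤ L * L * (L * L) := by nlinarith
      _ = L ^ 4 := by ring
      _ ≤ n := hn
  · -- p ≥ L
    set t := n / (m * p) with htdef
    have ht0 : 0 < t := Nat.div_pos (Nat.le_of_dvd hn0 hmpdvd) (Nat.mul_pos hm1 hpp.pos)
    rcases eq_or_lt_of_le (Nat.succ_le_of_lt ht0) with ht1 | ht2
    · right
      refine ⟨m, p, hpp, ?_, hm1, hmL⟩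
      have h2 := Nat.div_mul_cancel hmpdvd
      have h3 : t * (m * p) = n := by rw [htdef]; exact h2
      have ht1' : t = 1 := by omega
      rw [ht1', one_mul] at h3
      omega
    · -- t ≥ 2, get prime q ∣ n/m with q ≥ p
      have htdvd : t ∣ n / m := by
        rw [htdef, ← Nat.div_div_eq_div_mul]
        exact Nat.div_dvd_of_dvd hpd
      set q := t.minFac with hq
      have hqp : q.Prime := Nat.minFac_prime (by omega)
      have hqdvd : q ∣ n / m := dvd_trans (Nat.minFac_dvd t) htdvd
      have hpq : p ≤ q := Nat.minFac_le_of_dvd hqp.two_le hqdvd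
      have hqdvd2 : q ∣ (n / m) / p := by
        rw [Nat.div_div_eq_div_mul, ← htdef]
        exact Nat.minFac_dvd t
      have hpqdvd : p * q ∣ n / m := (Nat.dvd_div_iff_mul_dvd hpd).1 hqdvd2
      have hle : p * q ≤ n / m := Nat.le_of_dvd (by omega) hpqdvd
      left
      refine ⟨p, dvd_trans hpd (Nat.div_dvd_of_dvd hmdvd), hLp, ?_⟩
      calc p * p ≤ p * q := Nat.mul_le_mul_left _ hpq
        _ ≤ n / m := hle
        _ ≤ n := Nat.div_le_self _ _

lemma my_count_primes (R M : ℕ) (hR : 2 ≤ R) :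
    ((((Finset.Ioc R M).filter Nat.Prime).card : ℝ)) ≤ M * Real.log 4 / Real.log R := by
  have hR1 : (1:ℝ) < R := by exact_mod_cast hR
  have hlogR : 0 < Real.log R := Real.log_pos hR1
  rw [le_div_iff₀ hlogR]
  set F := (Finset.Ioc R M).filter Nat.Prime with hF
  have h1 : R ^ F.card ≤ ∏ p ∈ F, p := by
    apply Finset.pow_card_le_prod
    intro p hp
    exact (Finset.mem_Ioc.1 (Finset.mem_filter.1 hp).1).1.le
  have h2 : ∏ p ∈ F, p ≤ primorial M := by
    apply Finset.prod_le_prod_of_subset_of_one_le'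
    · intro p hp
      rw [Finset.mem_filter] at hp ⊢
      refine ⟨Finset.mem_range.2 ?_, hp.2⟩
      have := (Finset.mem_Ioc.1 hp.1).2
      omega
    · intro p hp _
      exact ((Finset.mem_filter.1 hp).2).one_lt.le
  have h3 : R ^ F.card ≤ 4 ^ M := le_trans h1 (h2.trans (primorial_le_4_pow M))
  have h4 : ((R:ℝ)) ^ F.card ≤ (4:ℝ) ^ M := by exact_mod_cast h3
  have h5 := Real.log_le_log (by positivity) h4
  rw [Real.log_pow, Real.log_pow] at h5
  calc (F.card : ℝ) * Real.log R ≤ (M : ℝ) * Real.log 4 := h5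
    _ = _ := by norm_num

lemma my_harmonic (n : ℕ) : ∑ m ∈ Finset.Icc 1 n, (1:ℝ)/m ≤ 1 + Real.log n := by
  have h1 : ((harmonic n : ℚ) : ℝ) = ∑ m ∈ Finset.Icc 1 n, (1:ℝ)/m := by
    rw [harmonic_eq_sum_Icc]
    push_cast
    simp [one_div]
  rw [← h1]
  exact harmonic_le_one_add_log n

lemma my_bad_bound (N : ℕ) (hN : 16 ≤ N) :
    ((Set.Icc 1 N \ divA).ncard : ℝ) ≤
      ((Nat.sqrt N * (⌊Real.log N⌋₊ + 1) + (⌊Real.log N⌋₊ + 1) ^ 4 : ℕ) : ℝ) +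
      (N : ℝ) * Real.log 4 * (1 + Real.log ((⌊Real.log N⌋₊ + 1 : ℕ) : ℝ)) / Real.log (Nat.sqrt N) := by
  set L : ℕ := ⌊Real.log N⌋₊ + 1 with hLdef
  set R : ℕ := Nat.sqrt N with hRdef
  set T : ℕ := R * L + L ^ 4 with hTdef
  have hN0 : 0 < N := by omega
  have hlogN1 : (1:ℝ) ≤ Real.log N := by
    have h16 : Real.log 16 ≤ Real.log N := by
      apply Real.log_le_log (by norm_num)
      exact_mod_cast hN
    have : (1:ℝ) ≤ Real.log 16 := by
      rw [show (1:ℝ) = Real.log (Real.exp 1) by rw [Real.log_exp]]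
      apply Real.log_le_log (Real.exp_pos 1)
      have := Real.exp_one_lt_d9
      linarith
    linarith
  have hL2 : 2 ≤ L := by
    have : 1 ≤ ⌊Real.log N⌋₊ := Nat.le_floor (by exact_mod_cast hlogN1)
    omega
  have hR2 : 2 ≤ R := by
    rw [hRdef, Nat.le_sqrt]
    omega
  have hlogR : 0 < Real.log R := Real.log_pos (by exact_mod_cast hR2)
  -- the two covering finsets
  set S1 : Finset ℕ := Finset.Icc 1 T with hS1
  set S2 : Finset ℕ := (Finset.Icc 1 (L-1)).biUnion
      (fun m => ((Finset.Ioc R (N/m)).filter Nat.Prime).image (fun P => m * P + 1)) with hS2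
  have hsub : Set.Icc 1 N \ divA ⊆ ↑(S1 ∪ S2) := by
    rintro k ⟨⟨hk1, hkN⟩, hkA⟩
    rw [Finset.coe_union, Set.mem_union]
    by_cases hkT : k ≤ T
    · left
      simp only [hS1, Finset.coe_Icc, Set.mem_Icc]
      exact ⟨hk1, hkT⟩
    · right
      push_neg at hkT
      set n := k - 1 with hndef
      have hnT : T ≤ n := by omega
      have hL4n : L ^ 4 ≤ n := by
        have : L ^ 4 ≤ T := by omega
        omega
      rcases my_struct L n hL2 hL4n with ⟨d, hd, hLd, hdd⟩ | ⟨m, p, hpp, hnmp, hm1, hmL⟩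
      · exfalso
        apply hkA
        refine ⟨d, n / d, (Nat.mul_div_cancel' hd).symm, ?_, ?_⟩
        · have h1 : Real.log k ≤ Real.log N :=
            Real.log_le_log (by exact_mod_cast hk1) (by exact_mod_cast hkN)
          have h2 : Real.log N < (L : ℝ) := by
            rw [hLdef]
            push_cast
            exact Nat.lt_floor_add_one _
          have h3 : (L:ℝ) ≤ d := by exact_mod_cast hLd
          linarith
        · exact (Nat.le_div_iff_mul_le (by omega : 0 < d)).2 hdd
      · -- k = m * p + 1
        apply Finset.mem_coe.2
        apply Finset.mem_biUnion.2
        refine ⟨m, ?_, ?_⟩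
        · rw [Finset.mem_Icc]; omega
        · apply Finset.mem_image.2
          refine ⟨p, ?_, by omega⟩
          rw [Finset.mem_filter, Finset.mem_Ioc]
          have hp2 := hpp.two_le
          have hpnm : p = n / m := by
            rw [hnmp, Nat.mul_div_cancel_left _ (by omega : 0 < m)]
          refine ⟨⟨?_, ?_⟩, hpp⟩
          · -- R < p
            have h1 : R + L ^ 3 ≤ n / L := by
              rw [Nat.le_div_iff_mul_le (by omega : 0 < L)]
              have : (R + L ^ 3) * L = R * L + L ^ 4 := by ring
              omega
            have h2 : n / L ≤ n / m := Nat.div_le_div_left (by omega) (by omega)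
            have hL3 : 1 ≤ L ^ 3 := Nat.one_le_pow _ _ (by omega)
            omega
          · -- p ≤ N / m
            rw [Nat.le_div_iff_mul_le (by omega : 0 < m), mul_comm]
            omega
  -- cardinalities
  have hcard : (Set.Icc 1 N \ divA).ncard ≤ S1.card + S2.card := by
    calc (Set.Icc 1 N \ divA).ncard ≤ (↑(S1 ∪ S2) : Set ℕ).ncard :=
          Set.ncard_le_ncard hsub (S1 ∪ S2).finite_toSet
      _ = (S1 ∪ S2).card := Set.ncard_coe_finset _
      _ ≤ S1.card + S2.card := Finset.card_union_le _ _
  have hS1card : S1.card = T := by rw [hS1, Nat.card_Icc]; omega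
  have hS2card : (S2.card : ℝ) ≤ (N : ℝ) * Real.log 4 * (1 + Real.log L) / Real.log R := by
    have h1 : S2.card ≤ ∑ m ∈ Finset.Icc 1 (L-1), ((Finset.Ioc R (N/m)).filter Nat.Prime).card := by
      refine le_trans (Finset.card_biUnion_le) (Finset.sum_le_sum fun m _ => ?_)
      exact Finset.card_image_le
    have h2 : ((∑ m ∈ Finset.Icc 1 (L-1), ((Finset.Ioc R (N/m)).filter Nat.Prime).card : ℕ) : ℝ)
        ≤ ∑ m ∈ Finset.Icc 1 (L-1), (N : ℝ) * Real.log 4 / Real.log R * (1/m) := by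
      push_cast
      refine Finset.sum_le_sum fun m hm => ?_
      have hm1 : 1 ≤ m := (Finset.mem_Icc.1 hm).1
      calc (((Finset.Ioc R (N/m)).filter Nat.Prime).card : ℝ)
          ≤ ((N/m : ℕ) : ℝ) * Real.log 4 / Real.log R := my_count_primes R (N/m) hR2
        _ ≤ ((N : ℝ)/m) * Real.log 4 / Real.log R := by
            have hc : ((N/m:ℕ):ℝ) ≤ (N:ℝ)/m := Nat.cast_div_le
            exact div_le_div_of_nonneg_right
              (mul_le_mul_of_nonneg_right hc (Real.log_nonneg (by norm_num))) hlogR.le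
        _ = (N : ℝ) * Real.log 4 / Real.log R * (1/m) := by ring
    have h3 : ∑ m ∈ Finset.Icc 1 (L-1), (N : ℝ) * Real.log 4 / Real.log R * (1/m)
        = (N : ℝ) * Real.log 4 / Real.log R * ∑ m ∈ Finset.Icc 1 (L-1), (1/m : ℝ) := by
      rw [Finset.mul_sum]
    have h4 : ∑ m ∈ Finset.Icc 1 (L-1), (1/m : ℝ) ≤ 1 + Real.log L := by
      refine (my_harmonic (L-1)).trans ?_
      have h5 : Real.log ((L-1 : ℕ) : ℝ) ≤ Real.log L := by
        apply Real.log_le_log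
        · have : 1 ≤ L - 1 := by omega
          exact_mod_cast this
        · exact_mod_cast Nat.sub_le L 1
      linarith
    have hcoef : (0:ℝ) ≤ (N : ℝ) * Real.log 4 / Real.log R := by
      apply div_nonneg _ hlogR.le
      exact mul_nonneg (Nat.cast_nonneg _) (Real.log_nonneg (by norm_num))
    calc (S2.card : ℝ) ≤ _ := by exact_mod_cast (Nat.cast_le (α := ℝ)).2 h1 |>.trans h2
      _ = (N : ℝ) * Real.log 4 / Real.log R * ∑ m ∈ Finset.Icc 1 (L-1), (1/m : ℝ) := h3
      _ ≤ (N : ℝ) * Real.log 4 / Real.log R * (1 + Real.log L) := by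
          exact mul_le_mul_of_nonneg_left h4 hcoef
      _ = (N : ℝ) * Real.log 4 * (1 + Real.log L) / Real.log R := by ring
  calc ((Set.Icc 1 N \ divA).ncard : ℝ) ≤ ((S1.card + S2.card : ℕ) : ℝ) := by exact_mod_cast hcard
    _ = (T : ℝ) + (S2.card : ℝ) := by rw [hS1card]; push_cast; ring
    _ ≤ _ := by
        exact add_le_add le_rfl hS2card

lemma my_sqrt_atTop : Tendsto Real.sqrt atTop atTop := by
  apply Filter.tendsto_atTop_atTop.2
  intro b
  refine ⟨(max b 0)^2, fun a ha => ?_⟩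
  have h1 : Real.sqrt ((max b 0)^2) = max b 0 := Real.sqrt_sq (le_max_right _ _)
  have h2 := Real.sqrt_le_sqrt ha
  calc b ≤ max b 0 := le_max_left _ _
    _ = Real.sqrt ((max b 0)^2) := h1.symm
    _ ≤ Real.sqrt a := h2

lemma my_logdiv : Tendsto (fun u : ℝ => Real.log u / u) atTop (nhds 0) := by
  have h := Real.tendsto_pow_log_div_mul_add_atTop 1 0 1 one_ne_zero
  refine h.congr fun x => ?_
  simp

lemma my_l1 : Tendsto (fun x : ℝ => (Real.log x + 1) / Real.sqrt x) atTop (nhds 0) := by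
  have hF : Tendsto (fun u : ℝ => 2*(Real.log u/u) + 1/u) atTop (nhds 0) := by
    have h := (my_logdiv.const_mul (2:ℝ)).add tendsto_inv_atTop_zero
    simpa [one_div] using h
  have h2 := hF.comp my_sqrt_atTop
  apply h2.congr'
  filter_upwards [eventually_ge_atTop (1:ℝ)] with x hx
  have hx0 : (0:ℝ) ≤ x := by linarith
  have hs : 0 < Real.sqrt x := Real.sqrt_pos.2 (by linarith)
  simp only [Function.comp_apply, Real.log_sqrt hx0]
  field_simp

lemma my_l2 : Tendsto (fun x : ℝ => 16*(Real.log x)^4/x) atTop (nhds 0) := by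
  have h := (Real.tendsto_pow_log_div_mul_add_atTop 1 0 4 one_ne_zero).const_mul (16:ℝ)
  rw [mul_zero] at h
  refine h.congr fun x => ?_
  simp [mul_div_assoc]

lemma my_l3 : Tendsto (fun y : ℝ => (1 + Real.log (y+1))/y) atTop (nhds 0) := by
  have h1 : Tendsto (fun y : ℝ => Real.log (y+1)/y) atTop (nhds 0) := by
    have h := (Real.tendsto_pow_log_div_mul_add_atTop 1 (-1) 1 one_ne_zero).comp
      (tendsto_atTop_add_const_right atTop (1:ℝ) tendsto_id)
    refine h.congr fun y => ?_
    simp only [Function.comp_apply, pow_one, id_eq]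
    congr 1
    ring
  have h2 : Tendsto (fun y : ℝ => 1/y) atTop (nhds 0) := by
    simpa [one_div] using tendsto_inv_atTop_zero
  have h := h2.add h1
  rw [add_zero] at h
  refine h.congr fun y => ?_
  rw [add_div]

lemma my_tendsto_g : Tendsto myg atTop (nhds 0) := by
  have hcast : Tendsto (fun N : ℕ => (N:ℝ)) atTop atTop := tendsto_natCast_atTop_atTop
  have p1 := my_l1.comp hcast
  have p2 := my_l2.comp hcast
  have p3 := ((my_l3.comp Real.tendsto_log_atTop).comp hcast).const_mul (4*Real.log 4)
  have h := (p1.add p2).add p3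
  simpa using h.congr (f₂ := myg) fun N => rfl

lemma my_squeeze (N : ℕ) (hN : 16 ≤ N) :
    ((Set.Icc 1 N \ divA).ncard : ℝ) / N ≤ myg N := by
  have hx16 : (16:ℝ) ≤ (N:ℝ) := by exact_mod_cast hN
  have hx0 : (0:ℝ) < N := by linarith
  have hlog4 : (0:ℝ) ≤ Real.log 4 := Real.log_nonneg (by norm_num)
  have hlog1 : (1:ℝ) ≤ Real.log N := by
    have h16 : Real.log 16 ≤ Real.log N := Real.log_le_log (by norm_num) hx16
    have : (1:ℝ) ≤ Real.log 16 := by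
      rw [show (1:ℝ) = Real.log (Real.exp 1) by rw [Real.log_exp]]
      apply Real.log_le_log (Real.exp_pos 1)
      have := Real.exp_one_lt_d9
      linarith
    linarith
  set R : ℕ := Nat.sqrt N with hRdef
  set Lc : ℕ := ⌊Real.log N⌋₊ + 1 with hLdef
  have hR2 : 2 ≤ R := by rw [hRdef, Nat.le_sqrt]; omega
  have hlogR : 0 < Real.log R := Real.log_pos (by exact_mod_cast hR2)
  have hs : 0 < Real.sqrt N := Real.sqrt_pos.2 hx0
  have hxx : Real.sqrt N * Real.sqrt N = (N:ℝ) := Real.mul_self_sqrt hx0.le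
  have hss : Real.sqrt (Real.sqrt N) * Real.sqrt (Real.sqrt N) = Real.sqrt N :=
    Real.mul_self_sqrt (Real.sqrt_nonneg _)
  have hss2 : (2:ℝ) ≤ Real.sqrt (Real.sqrt N) := by
    have h1 : Real.sqrt 16 ≤ Real.sqrt N := Real.sqrt_le_sqrt hx16
    have h2 : Real.sqrt (Real.sqrt 16) ≤ Real.sqrt (Real.sqrt N) := Real.sqrt_le_sqrt h1
    have h3 : Real.sqrt 16 = 4 := by
      rw [show (16:ℝ) = 4^2 by norm_num, Real.sqrt_sq (by norm_num)]
    have h4 : Real.sqrt (4:ℝ) = 2 := by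
      rw [show (4:ℝ) = 2^2 by norm_num, Real.sqrt_sq (by norm_num)]
    rw [h3, h4] at h2
    exact h2
  -- casts of L
  have hLc_le : ((Lc : ℕ) : ℝ) ≤ Real.log N + 1 := by
    rw [hLdef]
    push_cast
    have := Nat.floor_le (show (0:ℝ) ≤ Real.log N by linarith)
    linarith
  have hLc1 : (1:ℝ) ≤ ((Lc : ℕ) : ℝ) := by
    have : 1 ≤ Lc := by omega
    exact_mod_cast this
  -- log R lower bound
  have hlogR_ge : (1/4) * Real.log N ≤ Real.log R := by
    have h1 : Real.sqrt N < (R:ℝ) + 1 := by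
      rw [hRdef]
      exact Real.real_sqrt_lt_nat_sqrt_succ
    have h2 : Real.sqrt (Real.sqrt N) ≤ Real.sqrt N - 1 := by nlinarith
    have h3 : Real.sqrt (Real.sqrt N) ≤ (R:ℝ) := by linarith
    have h4 := Real.log_le_log (by linarith : (0:ℝ) < Real.sqrt (Real.sqrt N)) h3
    rw [Real.log_sqrt (Real.sqrt_nonneg _), Real.log_sqrt hx0.le] at h4
    linarith
  have hquart : (0:ℝ) < (1/4) * Real.log N := by linarith
  -- bound pieces
  have hb := my_bad_bound N hN
  have hdiv : ((Set.Icc 1 N \ divA).ncard : ℝ) / N ≤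
      (((R * Lc + Lc ^ 4 : ℕ) : ℝ) +
        (N : ℝ) * Real.log 4 * (1 + Real.log ((Lc : ℕ) : ℝ)) / Real.log R) / N :=
    div_le_div_of_nonneg_right hb hx0.le |>.trans_eq rfl
  rw [add_div] at hdiv
  have piece2 : ((N : ℝ) * Real.log 4 * (1 + Real.log ((Lc : ℕ) : ℝ)) / Real.log R) / N
      = Real.log 4 * (1 + Real.log ((Lc : ℕ) : ℝ)) / Real.log R := by
    field_simp
  have hnum0 : (0:ℝ) ≤ 1 + Real.log ((Lc : ℕ) : ℝ) := by
    have := Real.log_nonneg hLc1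
    linarith
  have hnum : 1 + Real.log ((Lc : ℕ) : ℝ) ≤ 1 + Real.log (Real.log N + 1) := by
    have := Real.log_le_log (by linarith : (0:ℝ) < ((Lc:ℕ):ℝ)) hLc_le
    linarith
  have piece2bound : Real.log 4 * (1 + Real.log ((Lc : ℕ) : ℝ)) / Real.log R
      ≤ (4*Real.log 4) * ((1 + Real.log (Real.log N + 1))/Real.log N) := by
    have h1 : Real.log 4 * (1 + Real.log ((Lc : ℕ) : ℝ)) / Real.log R
        ≤ Real.log 4 * (1 + Real.log (Real.log N + 1)) / ((1/4) * Real.log N) := by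
      apply div_le_div₀ (mul_nonneg hlog4 (by linarith : (0:ℝ) ≤ 1 + Real.log (Real.log (N:ℝ) + 1))) _ hquart hlogR_ge
      exact mul_le_mul_of_nonneg_left hnum hlog4
    calc _ ≤ _ := h1
      _ = (4*Real.log 4) * ((1 + Real.log (Real.log N + 1))/Real.log N) := by
          field_simp
  -- piece 1
  have hRle : (R:ℝ) ≤ Real.sqrt N := by rw [hRdef]; exact Real.nat_sqrt_le_real_sqrt
  have hpow : ((Lc:ℕ):ℝ)^4 ≤ 16*(Real.log N)^4 := by
    have h5 : ((Lc:ℕ):ℝ)^4 ≤ (Real.log N + 1)^4 := by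
      apply pow_le_pow_left₀ (by linarith) hLc_le
    have h6 : (Real.log N + 1)^4 ≤ (2*Real.log N)^4 := by
      apply pow_le_pow_left₀ (by linarith) (by linarith)
    calc ((Lc:ℕ):ℝ)^4 ≤ (2*Real.log N)^4 := h5.trans h6
      _ = 16*(Real.log N)^4 := by ring
  have piece1 : (((R * Lc + Lc ^ 4 : ℕ) : ℝ)) / N
      ≤ (Real.log N + 1)/Real.sqrt N + 16*(Real.log N)^4/N := by
    have hT : ((R * Lc + Lc ^ 4 : ℕ) : ℝ) ≤ Real.sqrt N * (Real.log N + 1) + 16*(Real.log N)^4 := by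
      have h7 := mul_le_mul hRle hLc_le (by linarith) (Real.sqrt_nonneg _)
      push_cast at h7 hpow ⊢
      linarith
    calc (((R * Lc + Lc ^ 4 : ℕ) : ℝ)) / N
        ≤ (Real.sqrt N * (Real.log N + 1) + 16*(Real.log N)^4) / N :=
          div_le_div_of_nonneg_right hT hx0.le
      _ = (Real.log N + 1)/Real.sqrt N + 16*(Real.log N)^4/N := by
          rw [add_div]
          congr 1
          rw [div_eq_div_iff hx0.ne' hs.ne']
          linear_combination (Real.log (N:ℝ) + 1) * hxx
  rw [piece2] at hdiv
  calc ((Set.Icc 1 N \ divA).ncard : ℝ) / N ≤ _ := hdiv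
    _ ≤ myg N := by
        rw [myg]
        have := add_le_add piece1 piece2bound
        linarith

/-- The set `A = {k : ∃ a b ∈ ℕ, k - 1 = ab and log k ≤ a ≤ b}` has asymptotic
density one. -/
theorem density_one_of_divisor_set :
    Filter.Tendsto
      (fun N : ℕ =>
        (({k : ℕ | ∃ a b : ℕ, k - 1 = a * b ∧ Real.log k ≤ (a : ℝ) ∧ a ≤ b} ∩
            Set.Icc 1 N).ncard : ℝ) / N)
      Filter.atTop (nhds 1) := by
  show Filter.Tendsto (fun N : ℕ => ((divA ∩ Set.Icc 1 N).ncard : ℝ) / N) Filter.atTop (nhds 1)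
  have hbad : Tendsto (fun N : ℕ => ((Set.Icc 1 N \ divA).ncard : ℝ)/N) atTop (nhds 0) := by
    apply squeeze_zero'
    · filter_upwards with N using by positivity
    · filter_upwards [eventually_ge_atTop 16] with N hN using my_squeeze N hN
    · exact my_tendsto_g
  have heq : (fun N : ℕ => 1 - ((Set.Icc 1 N \ divA).ncard : ℝ)/N) =ᶠ[atTop]
      (fun N : ℕ => ((divA ∩ Set.Icc 1 N).ncard : ℝ)/N) := by
    filter_upwards [eventually_ge_atTop 1] with N hN
    have hfin : (Set.Icc 1 N).Finite := Set.finite_Icc _ _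
    have h1 := Set.ncard_inter_add_ncard_diff_eq_ncard (Set.Icc 1 N) divA hfin
    have h2 : (Set.Icc 1 N).ncard = N := by
      rw [← Finset.coe_Icc, Set.ncard_coe_finset, Nat.card_Icc]; omega
    rw [Set.inter_comm, h2] at h1
    have hN0 : (0:ℝ) < N := by exact_mod_cast hN
    have h4 : ((divA ∩ Set.Icc 1 N).ncard : ℝ) + ((Set.Icc 1 N \ divA).ncard : ℝ) = N := by
      exact_mod_cast h1
    field_simp
    linarith
  have h := (tendsto_const_nhds (x := (1:ℝ)) (f := atTop (α := ℕ))).sub hbad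
  rw [sub_zero] at h
  exact Filter.Tendsto.congr' heq h
end
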